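/- arXiv:1607.08195 — 7 statements merged into one kernel-verified Lean document; each statement's English description precedes it below -/
import Mathlib

section
/- Every maximal independent (pairwise non-adjacent) subfamily of ℐ(s) equals ℐ(s,ε) for some ε ∈ {0,1}^s. -/
def AdjN (p q : ℕ × ℕ) : Prop :=
  ∃ x : ℝ, Set.Icc (p.1 : ℝ) p.2 ∩ Set.Icc (q.1 : ℝ) q.2 = {x}

/-- Membership in ℐ(s) = {[0,1],[s,s+1]} ∪ {[i,j] : 1 ≤ i < j ≤ s}. -/
def memIs (s : ℕ) (p : ℕ × ℕ) : Prop :=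
  p = (0, 1) ∨ p = (s, s + 1) ∨ (1 ≤ p.1 ∧ p.1 < p.2 ∧ p.2 ≤ s)

def memIsε (s : ℕ) (ε : ℕ → Bool) (p : ℕ × ℕ) : Prop :=
  (1 ≤ p.1 ∧ p.1 < p.2 ∧ p.2 ≤ s ∧ ε p.1 = false ∧ ε p.2 = true) ∨
  (p = (0, 1) ∧ ε 1 = true) ∨ (p = (s, s + 1) ∧ ε s = false)

lemma adj_mk {a b c d : ℕ} (hab : a ≤ b) (hbd : b ≤ d) (hbc : b = c) :
    AdjN (a, b) (c, d) := by
  refine ⟨(b : ℝ), ?_⟩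
  subst hbc
  rw [show Set.Icc ((a,b).1 : ℝ) (a,b).2 = Set.Icc (a:ℝ) b from rfl,
      show Set.Icc ((b,d).1 : ℝ) (b,d).2 = Set.Icc (b:ℝ) d from rfl,
      Set.Icc_inter_Icc]
  have h1 : max (a:ℝ) b = b := max_eq_right (by exact_mod_cast hab)
  have h2 : min (b:ℝ) d = b := min_eq_left (by exact_mod_cast hbd)
  rw [h1, h2, Set.Icc_self]

lemma adj_iff (p q : ℕ × ℕ) (hp : p.1 < p.2) (hq : q.1 < q.2) :
    AdjN p q → p.2 = q.1 ∨ q.2 = p.1 := by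
  obtain ⟨a, b⟩ := p
  obtain ⟨c, d⟩ := q
  simp only at hp hq ⊢
  rintro ⟨x, hx⟩
  simp only at hx
  rw [Set.Icc_inter_Icc] at hx
  have hne : (Set.Icc (max (a:ℝ) c) (min (b:ℝ) d)).Nonempty := by
    rw [hx]; exact ⟨x, rfl⟩
  have hle : max (a:ℝ) c ≤ min (b:ℝ) d := Set.nonempty_Icc.1 hne
  have hmax : max (a:ℝ) c ∈ ({x} : Set ℝ) := hx ▸ Set.left_mem_Icc.2 hle
  have hmin : min (b:ℝ) d ∈ ({x} : Set ℝ) := hx ▸ Set.right_mem_Icc.2 hle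
  have heqR : max (a:ℝ) c = min (b:ℝ) d := by
    simp only [Set.mem_singleton_iff] at hmax hmin
    rw [hmax, hmin]
  have heq : max a c = min b d := by
    have : ((max a c : ℕ) : ℝ) = ((min b d : ℕ) : ℝ) := by
      push_cast; exact heqR
    exact_mod_cast this
  rcases max_choice a c with h1 | h1 <;> rcases min_choice b d with h2 | h2 <;>
    rw [h1, h2] at heq
  · omega
  · omega
  · left; omega
  · omega

/-- Every maximal independent subfamily of ℐ(s) equals ℐ(s,ε) for some ε ∈ {0,1}^s. -/
theorem stmt_4 (s : ℕ) (hs : 1 ≤ s) (M : Set (ℕ × ℕ))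
    (hsub : ∀ p ∈ M, memIs s p)
    (hind : ∀ p ∈ M, ∀ q ∈ M, ¬ AdjN p q)
    (hmax : ∀ M' : Set (ℕ × ℕ), M ⊆ M' → (∀ p ∈ M', memIs s p) →
      (∀ p ∈ M', ∀ q ∈ M', ¬ AdjN p q) → M' = M) :
    ∃ ε : ℕ → Bool, M = {p | memIsε s ε p} := by
  classical
  -- every member of M is a nondegenerate interval
  have hlt : ∀ p ∈ M, p.1 < p.2 := by
    intro p hp
    rcases hsub p hp with h | h | h
    · rw [h]; norm_num
    · rw [h]; simp
    · exact h.2.1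
  -- no member's right endpoint is another's left endpoint
  have hnadj : ∀ p ∈ M, ∀ q ∈ M, p.2 ≠ q.1 := by
    intro p hp q hq h
    refine hind p hp q hq ?_
    have : AdjN (p.1, p.2) (q.1, q.2) :=
      adj_mk (le_of_lt (hlt p hp)) (h ▸ le_of_lt (hlt q hq)) h
    exact this
  set ε : ℕ → Bool := fun k => decide (∃ p ∈ M, p.2 = k) with hε
  have hεt : ∀ k, ε k = true ↔ ∃ p ∈ M, p.2 = k := by
    intro k; simp [hε]
  have hεf : ∀ k, ε k = false ↔ ¬ ∃ p ∈ M, p.2 = k := by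
    intro k; simp [hε]
  refine ⟨ε, ?_⟩
  ext p
  simp only [Set.mem_setOf_eq]
  constructor
  · intro hp
    rcases hsub p hp with h | h | h
    · exact Or.inr (Or.inl ⟨h, (hεt 1).2 ⟨p, hp, by rw [h]⟩⟩)
    · refine Or.inr (Or.inr ⟨h, (hεf s).2 ?_⟩)
      rintro ⟨q, hq, hq2⟩
      exact hnadj q hq p hp (by rw [hq2, h])
    · refine Or.inl ⟨h.1, h.2.1, h.2.2, (hεf p.1).2 ?_, (hεt p.2).2 ⟨p, hp, rfl⟩⟩
      rintro ⟨q, hq, hq2⟩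
      exact hnadj q hq p hp hq2
  · intro hp
    rcases hp with ⟨hu, huv, hv, hεu, hεv⟩ | ⟨hp01, hε1⟩ | ⟨hps, hεs⟩
    · -- interior interval: insert it and use maximality
      obtain ⟨r, hr, hr2⟩ := (hεt p.2).1 hεv
      have hεu' := (hεf p.1).1 hεu
      have key : insert p M = M := by
        refine hmax (insert p M) (Set.subset_insert _ _) ?_ ?_
        · intro q hq
          rcases hq with hq | hq
          · subst hq; exact Or.inr (Or.inr ⟨hu, huv, hv⟩)
          · exact hsub q hq
        · intro x hx y hy hadj
          have hxlt : x.1 < x.2 := by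
            rcases hx with hx | hx
            · subst hx; exact huv
            · exact hlt x hx
          have hylt : y.1 < y.2 := by
            rcases hy with hy | hy
            · subst hy; exact huv
            · exact hlt y hy
          have hcase := adj_iff x y hxlt hylt hadj
          -- in all cases some interval ends where another starts
          have noEndAtU : ∀ q ∈ insert p M, q.2 ≠ p.1 := by
            intro q hq hq2
            rcases hq with hq | hq
            · subst hq; omega
            · exact hεu' ⟨q, hq, hq2⟩
          have noStartAtV : ∀ q ∈ insert p M, q.1 ≠ p.2 := by
            intro q hq hq1
            rcases hq with hq | hq
            · subst hq; omega
            · exact hnadj r hr q hq (by rw [hr2, hq1])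
          rcases hx with hx | hx <;> rcases hy with hy | hy
          · subst hx hy
            rcases hcase with h | h <;> omega
          · subst hx
            rcases hcase with h | h
            · exact noStartAtV y (Or.inr hy) h.symm
            · exact noEndAtU y (Or.inr hy) h
          · subst hy
            rcases hcase with h | h
            · exact noEndAtU x (Or.inr hx) h
            · exact noStartAtV x (Or.inr hx) h.symm
          · exact hind x hx y hy hadj
      rw [← key]; exact Or.inl rfl
    · -- p = (0,1): some interval in M ends at 1, it must be (0,1)
      obtain ⟨q, hq, hq2⟩ := (hεt 1).1 hε1
      have : q = (0, 1) := by
        rcases hsub q hq with h | h | h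
        · exact h
        · exfalso; rw [h] at hq2; simp at hq2; omega
        · omega
      rw [hp01, ← this]; exact hq
    · -- p = (s, s+1): insert it and use maximality
      have hεs' := (hεf s).1 hεs
      have key : insert p M = M := by
        refine hmax (insert p M) (Set.subset_insert _ _) ?_ ?_
        · intro q hq
          rcases hq with hq | hq
          · subst hq; rw [hps]; exact Or.inr (Or.inl rfl)
          · exact hsub q hq
        · intro x hx y hy hadj
          have hplt : p.1 < p.2 := by rw [hps]; simp
          have hxlt : x.1 < x.2 := by
            rcases hx with hx | hx
            · subst hx; exact hplt
            · exact hlt x hx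
          have hylt : y.1 < y.2 := by
            rcases hy with hy | hy
            · subst hy; exact hplt
            · exact hlt y hy
          have hcase := adj_iff x y hxlt hylt hadj
          have noEndAtS : ∀ q ∈ insert p M, q.2 ≠ p.1 := by
            intro q hq hq2
            rcases hq with hq | hq
            · subst hq; rw [hps] at hq2; simp at hq2
            · refine hεs' ⟨q, hq, ?_⟩
              rw [hq2, hps]
          have noStartAtS1 : ∀ q ∈ insert p M, q.1 ≠ p.2 := by
            intro q hq hq1
            rcases hq with hq | hq
            · subst hq; rw [hps] at hq1; simp at hq1
            · rcases hsub q hq with h | h | h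
              · rw [h, hps] at hq1; simp at hq1
              · rw [h, hps] at hq1; simp at hq1
              · rw [hps] at hq1; simp at hq1; omega
          rcases hx with hx | hx <;> rcases hy with hy | hy
          · subst hx hy
            rcases hcase with h | h <;> omega
          · subst hx
            rcases hcase with h | h
            · exact noStartAtS1 y (Or.inr hy) h.symm
            · exact noEndAtS y (Or.inr hy) h
          · subst hy
            rcases hcase with h | h
            · exact noEndAtS x (Or.inr hx) h
            · exact noStartAtS1 x (Or.inr hx) h.symm
          · exact hind x hx y hy hadj
      rw [← key]; exact Or.inl rfl
end

section
/- Let G₁, G₂ be graphs and G = G₁ * G₂ their disjunctive product. If C is a finite clique in G, and γ_i denotes the multiset of i-th coordinates of elements of C, then the independence number of (the multigraph expansion of) γ₁ is at most the clique number of γ₂. -/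
lemma exists_le_map_eq {α β : Type*} (f : α → β) (s : Multiset α) (t : Multiset β)
    (h : t ≤ s.map f) : ∃ u, u ≤ s ∧ u.map f = t := by
  induction s using Quotient.inductionOn with | _ ls =>
  induction t using Quotient.inductionOn with | _ lt =>
  replace h : lt.Subperm (ls.map f) := h
  obtain ⟨l, hperm, hsub⟩ := h
  obtain ⟨l', hl', rfl⟩ := List.sublist_map_iff.mp hsub
  exact ⟨↑l', hl'.subperm, Quotient.sound hperm⟩

/-- Let C be a finite clique in the disjunctive product G₁ * G₂.  If t is an
independent sub-multiset of the multiset γ₁ of first coordinates of C (in the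
multigraph expansion, where copies of the same vertex are non-adjacent), then its
size is at most the size of some clique of G₂ inside the support of the multiset γ₂
of second coordinates; i.e. α(γ₁) ≤ ω(γ₂). -/
theorem stmt_7 {V₁ V₂ : Type*} (G₁ : SimpleGraph V₁) (G₂ : SimpleGraph V₂)
    (C : Finset (V₁ × V₂))
    (hC : ∀ u ∈ C, ∀ v ∈ C, u ≠ v → G₁.Adj u.1 v.1 ∨ G₂.Adj u.2 v.2)
    (t : Multiset V₁) (ht : t ≤ Multiset.map Prod.fst C.val)
    (hind : ∀ x ∈ t, ∀ y ∈ t, ¬ G₁.Adj x y) :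
    ∃ s : Finset V₂, G₂.IsClique ↑s ∧
      (∀ y ∈ s, y ∈ Multiset.map Prod.snd C.val) ∧
      Multiset.card t ≤ s.card := by
  obtain ⟨D, hD, rfl⟩ := exists_le_map_eq Prod.fst C.val t ht
  have hDC : ∀ u ∈ D, u ∈ C := fun u hu => Multiset.subset_of_le hD hu
  have hDnodup : D.Nodup := Multiset.nodup_of_le hD C.nodup
  -- adjacency of second coordinates for distinct elements of D
  have key : ∀ u ∈ D, ∀ v ∈ D, u ≠ v → G₂.Adj u.2 v.2 := by
    intro u hu v hv huv
    rcases hC u (hDC u hu) v (hDC v hv) huv with h1 | h2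
    · exact absurd h1 (hind u.1 (Multiset.mem_map_of_mem _ hu) v.1
        (Multiset.mem_map_of_mem _ hv))
    · exact h2
  have hinj : ∀ u ∈ D, ∀ v ∈ D, u.2 = v.2 → u = v := by
    intro u hu v hv h
    by_contra hne
    exact G₂.irrefl (h ▸ key u hu v hv hne)
  have hnodup : (D.map Prod.snd).Nodup := Multiset.Nodup.map_on hinj hDnodup
  refine ⟨⟨D.map Prod.snd, hnodup⟩, ?_, ?_, ?_⟩
  · intro y₁ hy₁ y₂ hy₂ hne
    obtain ⟨u, hu, rfl⟩ := Multiset.mem_map.mp hy₁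
    obtain ⟨v, hv, rfl⟩ := Multiset.mem_map.mp hy₂
    exact key u hu v hv (fun h => hne (by rw [h]))
  · intro y hy
    obtain ⟨u, hu, rfl⟩ := Multiset.mem_map.mp hy
    exact Multiset.mem_map_of_mem _ (hDC u hu)
  · simp [Finset.card]
end

section
/- For any finite nonempty family 𝒢 of closed intervals of positive length in ℝ, there exist an integer s ≥ 0 and a graph homomorphism f : 𝒢 → ℐ(s) (with respect to the one-point-intersection adjacency). -/
def AdjI (I J : ℝ × ℝ) : Prop :=
  ∃ x : ℝ, Set.Icc I.1 I.2 ∩ Set.Icc J.1 J.2 = {x}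

lemma icc_nat_touch (i j k : ℕ) (h1 : i ≤ j) (h2 : j ≤ k) :
    Set.Icc (i : ℝ) j ∩ Set.Icc (j : ℝ) k = {(j : ℝ)} := by
  rw [Set.Icc_inter_Icc]
  have h1' : (i : ℝ) ≤ j := by exact_mod_cast h1
  have h2' : (j : ℝ) ≤ k := by exact_mod_cast h2
  rw [max_eq_right h1', min_eq_left h2', Set.Icc_self]

lemma adjI_char (a b c d : ℝ) (hab : a < b) (hcd : c < d)
    (h : ∃ x : ℝ, Set.Icc a b ∩ Set.Icc c d = {x}) : b = c ∨ d = a := by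
  obtain ⟨x, hx⟩ := h
  rw [Set.Icc_inter_Icc, Set.Icc_eq_singleton_iff] at hx
  obtain ⟨h1, h2⟩ := hx
  rcases max_choice a c with h3 | h3 <;> rcases min_choice b d with h4 | h4 <;>
    rw [h3] at h1 <;> rw [h4] at h2
  · exfalso; linarith
  · right; linarith
  · left; linarith
  · exfalso; linarith

/-- Every finite nonempty family of closed intervals of positive length admits a graph
homomorphism into some ℐ(s). -/
theorem stmt_8 (G : Finset (ℝ × ℝ)) (hne : G.Nonempty) (hpos : ∀ I ∈ G, I.1 < I.2) :
    ∃ (s : ℕ) (f : ℝ × ℝ → ℕ × ℕ),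
      (∀ I ∈ G, memIs s (f I)) ∧
      (∀ I ∈ G, ∀ J ∈ G, AdjI I J → AdjN (f I) (f J)) := by
  classical
  set E : Finset ℝ := G.image Prod.fst ∪ G.image Prod.snd with hE
  have hmem1 : ∀ I ∈ G, I.1 ∈ E := fun I hI =>
    Finset.mem_union_left _ (Finset.mem_image_of_mem _ hI)
  have hmem2 : ∀ I ∈ G, I.2 ∈ E := fun I hI =>
    Finset.mem_union_right _ (Finset.mem_image_of_mem _ hI)
  set φ : ℝ → ℕ := fun x => 1 + (E.filter (fun y => y < x)).card with hφ
  have hmono : ∀ x y : ℝ, x ∈ E → x < y → φ x < φ y := by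
    intro x y hx hxy
    have hss : E.filter (fun z => z < x) ⊂ E.filter (fun z => z < y) := by
      constructor
      · intro z hz
        simp only [Finset.mem_filter] at hz ⊢
        exact ⟨hz.1, hz.2.trans hxy⟩
      · intro h
        have hx' := h (Finset.mem_filter.mpr ⟨hx, hxy⟩)
        simp only [Finset.mem_filter] at hx'
        exact lt_irrefl x hx'.2
    simpa [hφ] using Finset.card_lt_card hss
  have hub : ∀ y ∈ E, φ y ≤ E.card := by
    intro y hy
    have hss : E.filter (fun z => z < y) ⊂ E := by
      constructor
      · exact Finset.filter_subset _ _
      · intro h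
        have := h hy
        simp only [Finset.mem_filter] at this
        exact lt_irrefl y this.2
    have := Finset.card_lt_card hss
    simp only [hφ]
    omega
  refine ⟨E.card, fun I => (φ I.1, φ I.2), ?_, ?_⟩
  · intro I hI
    right; right
    refine ⟨by simp [hφ], hmono I.1 I.2 (hmem1 I hI) (hpos I hI), hub I.2 (hmem2 I hI)⟩
  · intro I hI J hJ hadj
    rcases adjI_char I.1 I.2 J.1 J.2 (hpos I hI) (hpos J hJ) hadj with h | h
    · have h1 : φ I.1 < φ I.2 := hmono _ _ (hmem1 I hI) (hpos I hI)
      have h2 : φ I.2 < φ J.2 := by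
        have : I.2 < J.2 := h ▸ hpos J hJ
        exact hmono _ _ (hmem2 I hI) this
      refine ⟨(φ I.2 : ℝ), ?_⟩
      have := icc_nat_touch (φ I.1) (φ I.2) (φ J.2) h1.le h2.le
      simpa [h] using this
    · have h1 : φ J.1 < φ J.2 := hmono _ _ (hmem1 J hJ) (hpos J hJ)
      have h2 : φ I.1 < φ I.2 := hmono _ _ (hmem1 I hI) (hpos I hI)
      refine ⟨(φ I.1 : ℝ), ?_⟩
      have hj2 : φ J.2 = φ I.1 := by rw [h]
      have := icc_nat_touch (φ J.1) (φ J.2) (φ I.2) h1.le (by rw [hj2]; exact h2.le)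
      rw [Set.inter_comm]
      simpa [hj2] using this
end

section
/- Let 𝒢 be a finite nonempty family of closed intervals in ℝ and let s = s(𝒢) be the minimal integer for which there exists a graph homomorphism f : 𝒢 → ℐ(s). Then every unit interval [i,i+1] with 0 ≤ i ≤ s lies in the image f(𝒢). -/
lemma memIs_iff (s : ℕ) (p : ℕ × ℕ) : memIs s p ↔
    (p.1 = 0 ∧ p.2 = 1) ∨ (p.1 = s ∧ p.2 = s + 1) ∨ (1 ≤ p.1 ∧ p.1 < p.2 ∧ p.2 ≤ s) := by
  simp [memIs, Prod.ext_iff]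

lemma memIs_lt {s : ℕ} {p : ℕ × ℕ} (h : memIs s p) : p.1 < p.2 := by
  rw [memIs_iff] at h; omega

lemma adjN_iff {p q : ℕ × ℕ} (h1 : p.1 < p.2) (h2 : q.1 < q.2) :
    AdjN p q ↔ (p.2 = q.1 ∨ q.2 = p.1) := by
  constructor
  · rintro ⟨x, hx⟩
    rw [Set.Icc_inter_Icc, Set.Icc_eq_singleton_iff] at hx
    have h5 : (p.1 ⊔ q.1 : ℕ) = (p.2 ⊓ q.2 : ℕ) := by
      have := hx.1.trans hx.2.symm
      exact_mod_cast this
    omega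
  · intro h
    refine ⟨((p.1 ⊔ q.1 : ℕ) : ℝ), ?_⟩
    rw [Set.Icc_inter_Icc, Set.Icc_eq_singleton_iff]
    have h5 : p.2 ⊓ q.2 = p.1 ⊔ q.1 := by omega
    constructor
    · push_cast; rfl
    · rw [← Nat.cast_inj (R := ℝ)] at h5
      push_cast at h5 ⊢
      exact h5

lemma build (G : Finset (ℝ × ℝ)) (s i : ℕ) (f : ℝ × ℝ → ℕ × ℕ)
    (hf1 : ∀ I ∈ G, memIs s (f I))
    (hf2 : ∀ I ∈ G, ∀ J ∈ G, AdjI I J → AdjN (f I) (f J))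
    (hcon : ∀ I ∈ G, f I ≠ (i, i + 1))
    (F : ℕ × ℕ → ℕ × ℕ) (s' : ℕ)
    (hmem : ∀ p, memIs s p → p ≠ (i, i + 1) → memIs s' (F p))
    (htouch : ∀ p q, memIs s p → memIs s q → p ≠ (i, i + 1) → q ≠ (i, i + 1) →
      (p.2 = q.1 ∨ q.2 = p.1) → ((F p).2 = (F q).1 ∨ (F q).2 = (F p).1)) :
    ∃ g : ℝ × ℝ → ℕ × ℕ,
      (∀ I ∈ G, memIs s' (g I)) ∧
      (∀ I ∈ G, ∀ J ∈ G, AdjI I J → AdjN (g I) (g J)) := by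
  refine ⟨fun I => F (f I), fun I hI => hmem _ (hf1 I hI) (hcon I hI), fun I hI J hJ ha => ?_⟩
  rw [adjN_iff (memIs_lt (hmem _ (hf1 I hI) (hcon I hI)))
      (memIs_lt (hmem _ (hf1 J hJ) (hcon J hJ)))]
  exact htouch _ _ (hf1 I hI) (hf1 J hJ) (hcon I hI) (hcon J hJ)
    ((adjN_iff (memIs_lt (hf1 I hI)) (memIs_lt (hf1 J hJ))).mp (hf2 I hI J hJ ha))

set_option maxHeartbeats 2000000 in
/-- If s = s(𝒢) is minimal admitting a homomorphism f : 𝒢 → ℐ(s), then every unit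
interval [i,i+1], 0 ≤ i ≤ s, lies in the image f(𝒢). -/
theorem stmt_9 (G : Finset (ℝ × ℝ)) (hne : G.Nonempty) (hpos : ∀ I ∈ G, I.1 < I.2)
    (s : ℕ) (f : ℝ × ℝ → ℕ × ℕ)
    (hf1 : ∀ I ∈ G, memIs s (f I))
    (hf2 : ∀ I ∈ G, ∀ J ∈ G, AdjI I J → AdjN (f I) (f J))
    (hmin : ∀ s' < s, ¬ ∃ g : ℝ × ℝ → ℕ × ℕ,
      (∀ I ∈ G, memIs s' (g I)) ∧
      (∀ I ∈ G, ∀ J ∈ G, AdjI I J → AdjN (g I) (g J))) :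
    ∀ i ≤ s, ∃ I ∈ G, f I = (i, i + 1) := by
  intro i hi
  by_contra hcon
  push_neg at hcon
  rcases Nat.eq_zero_or_pos s with hs | hs
  · subst hs
    obtain ⟨I, hI⟩ := hne
    have h1 := hf1 I hI
    rw [memIs_iff] at h1
    refine hcon I hI ?_
    have hi0 : i = 0 := by omega
    subst hi0
    rw [Prod.ext_iff]
    omega
  · refine hmin (s - 1) (by omega) ?_
    by_cases hi0 : i = 0
    · subst hi0
      refine build G s 0 f hf1 hf2 hcon
        (fun p => if p.1 = 1 ∧ p.2 = 2 then (0, 1) else (max p.1 2 - 1, max p.2 2 - 1))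
        (s - 1) ?_ ?_
      · intro p hp hne'
        rw [memIs_iff] at hp
        simp only [Ne, Prod.ext_iff] at hne'
        rw [memIs_iff]
        split_ifs with h <;> omega
      · intro p q hp hq hp' hq' ht
        rw [memIs_iff] at hp hq
        simp only [Ne, Prod.ext_iff] at hp' hq'
        split_ifs with h1 h2 h2 <;> omega
    · by_cases his : i = s
      · subst his
        refine build G i i f hf1 hf2 hcon
          (fun p => if p.1 = i - 1 ∧ p.2 = i then (i - 1, i) else (p.1, min p.2 (i - 1)))
          (i - 1) ?_ ?_
        · intro p hp hne'
          rw [memIs_iff] at hp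
          simp only [Ne, Prod.ext_iff] at hne'
          rw [memIs_iff]
          split_ifs with h <;> omega
        · intro p q hp hq hp' hq' ht
          rw [memIs_iff] at hp hq
          simp only [Ne, Prod.ext_iff] at hp' hq'
          split_ifs with h1 h2 h2 <;> omega
      · -- middle case: 1 ≤ i ≤ s - 1
        refine build G s i f hf1 hf2 hcon
          (fun p => ((if p.1 ≤ i then p.1 else p.1 - 1), (if p.2 ≤ i then p.2 else p.2 - 1)))
          (s - 1) ?_ ?_
        · intro p hp hne'
          rw [memIs_iff] at hp
          simp only [Ne, Prod.ext_iff] at hne'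
          rw [memIs_iff]
          dsimp only
          split_ifs <;> omega
        · intro p q hp hq hp' hq' ht
          rw [memIs_iff] at hp hq
          simp only [Ne, Prod.ext_iff] at hp' hq'
          dsimp only
          split_ifs <;> omega
end

section
/- Let γ be a formal ℕ-combination of closed intervals in ℝ with independence number α(γ) > 1 (with respect to one-point-intersection adjacency). Then the total multiplicity satisfies |γ| ≤ 4α(γ) − 3. -/
namespace Stmt14Aux

noncomputable def ind (P : Prop) : ℕ := @ite _ P (Classical.propDecidable P) 1 0

lemma ind_pos {P : Prop} (h : P) : ind P = 1 := by simp [ind, h]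
lemma ind_neg {P : Prop} (h : ¬ P) : ind P = 0 := by simp [ind, h]
lemma ind_le_one (P : Prop) : ind P ≤ 1 := by
  by_cases h : P
  · rw [ind_pos h]
  · rw [ind_neg h]; omega

noncomputable def cnt (γ : Multiset (ℝ × ℝ)) (p : ℝ × ℝ → Prop) : ℕ :=
  @Multiset.countP _ p (Classical.decPred p) γ

lemma cnt_cons (a : ℝ × ℝ) (s : Multiset (ℝ × ℝ)) (p : ℝ × ℝ → Prop) :
    cnt (a ::ₘ s) p = cnt s p + ind (p a) := by
  unfold cnt
  rw [Multiset.countP_cons]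
  by_cases h : p a
  · rw [if_pos h, ind_pos h]
  · rw [if_neg h, ind_neg h]

lemma cnt_eq_sum (γ : Multiset (ℝ × ℝ)) (p : ℝ × ℝ → Prop) :
    cnt γ p = (γ.map (fun I => ind (p I))).sum := by
  induction γ using Multiset.induction_on with
  | empty => simp [cnt]
  | cons a s ih =>
    rw [Multiset.map_cons, Multiset.sum_cons, ← ih, cnt_cons]
    omega

lemma cnt_congr (γ : Multiset (ℝ × ℝ)) {p q : ℝ × ℝ → Prop}
    (h : ∀ I ∈ γ, p I ↔ q I) : cnt γ p = cnt γ q := by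
  rw [cnt_eq_sum, cnt_eq_sum]
  congr 1
  exact Multiset.map_congr rfl (fun I hI => by
    by_cases hp : p I
    · rw [ind_pos hp, ind_pos ((h I hI).1 hp)]
    · rw [ind_neg hp, ind_neg (fun hq => hp ((h I hI).2 hq))])

lemma cnt_eq_zero (γ : Multiset (ℝ × ℝ)) {p : ℝ × ℝ → Prop}
    (h : ∀ I ∈ γ, ¬ p I) : cnt γ p = 0 := by
  letI := Classical.decPred p
  unfold cnt; rw [Multiset.countP_eq_zero]; exact h

lemma cnt_pos (γ : Multiset (ℝ × ℝ)) {p : ℝ × ℝ → Prop}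
    (h : ∃ I ∈ γ, p I) : 1 ≤ cnt γ p := by
  letI := Classical.decPred p
  unfold cnt; rw [Nat.succ_le_iff, Multiset.countP_pos]; exact h

-- generic linear identities
lemma cnt_add_eq_add (γ : Multiset (ℝ × ℝ)) (p q r s : ℝ × ℝ → Prop)
    (h : ∀ I ∈ γ, ind (p I) + ind (q I) = ind (r I) + ind (s I)) :
    cnt γ p + cnt γ q = cnt γ r + cnt γ s := by
  rw [cnt_eq_sum, cnt_eq_sum, cnt_eq_sum, cnt_eq_sum, ← Multiset.sum_map_add,
    ← Multiset.sum_map_add]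
  congr 1
  exact Multiset.map_congr rfl h

lemma cnt_eq_add (γ : Multiset (ℝ × ℝ)) (p r s : ℝ × ℝ → Prop)
    (h : ∀ I ∈ γ, ind (p I) = ind (r I) + ind (s I)) :
    cnt γ p = cnt γ r + cnt γ s := by
  rw [cnt_eq_sum, cnt_eq_sum, cnt_eq_sum, ← Multiset.sum_map_add]
  congr 1
  exact Multiset.map_congr rfl h

lemma cnt_le_cnt (γ : Multiset (ℝ × ℝ)) (p q : ℝ × ℝ → Prop)
    (h : ∀ I ∈ γ, ind (p I) ≤ ind (q I)) : cnt γ p ≤ cnt γ q := by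
  rw [cnt_eq_sum, cnt_eq_sum]
  exact Multiset.sum_map_le_sum_map _ _ h

lemma cnt_add4_le (γ : Multiset (ℝ × ℝ)) (p q r s w : ℝ × ℝ → Prop)
    (h : ∀ I ∈ γ, ind (p I) + ind (q I) + ind (r I) + ind (s I) ≤ ind (w I)) :
    cnt γ p + cnt γ q + cnt γ r + cnt γ s ≤ cnt γ w := by
  rw [cnt_eq_sum, cnt_eq_sum, cnt_eq_sum, cnt_eq_sum, cnt_eq_sum,
    ← Multiset.sum_map_add, ← Multiset.sum_map_add, ← Multiset.sum_map_add]
  exact Multiset.sum_map_le_sum_map _ _ h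

lemma cnt_eq_add4 (γ : Multiset (ℝ × ℝ)) (p q r s w : ℝ × ℝ → Prop)
    (h : ∀ I ∈ γ, ind (w I) = ind (p I) + ind (q I) + ind (r I) + ind (s I)) :
    cnt γ w = cnt γ p + cnt γ q + cnt γ r + cnt γ s := by
  rw [cnt_eq_sum, cnt_eq_sum, cnt_eq_sum, cnt_eq_sum, cnt_eq_sum,
    ← Multiset.sum_map_add, ← Multiset.sum_map_add, ← Multiset.sum_map_add]
  congr 1
  exact Multiset.map_congr rfl h

lemma cnt_true (γ : Multiset (ℝ × ℝ)) : cnt γ (fun _ => True) = Multiset.card γ := by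
  induction γ using Multiset.induction_on with
  | empty => simp [cnt]
  | cons a s ih =>
    rw [cnt_cons, ih, ind_pos trivial, Multiset.card_cons]

-- partition lemma
lemma cnt_mem_eq_sum (γ : Multiset (ℝ × ℝ)) (f : ℝ × ℝ → ℝ) (q : ℝ × ℝ → Prop)
    (A : Finset ℝ) :
    cnt γ (fun I => f I ∈ A ∧ q I) = ∑ w ∈ A, cnt γ (fun I => f I = w ∧ q I) := by
  induction A using Finset.induction_on with
  | empty =>
    rw [Finset.sum_empty]
    exact cnt_eq_zero γ (by simp)
  | @insert a A' ha ih =>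
    rw [Finset.sum_insert ha, ← ih]
    refine cnt_eq_add γ _ _ _ (fun I hI => ?_)
    by_cases hq : q I
    · by_cases h1 : f I = a
      · have h2 : f I ∉ A' := fun h => ha (h1 ▸ h)
        rw [ind_pos ⟨by rw [h1]; exact Finset.mem_insert_self a A', hq⟩,
            ind_pos ⟨h1, hq⟩, ind_neg (fun h => h2 h.1)]
      · by_cases h2 : f I ∈ A'
        · rw [ind_pos ⟨Finset.mem_insert_of_mem h2, hq⟩, ind_neg (fun h => h1 h.1),
            ind_pos ⟨h2, hq⟩]
        · rw [ind_neg (fun h => (Finset.mem_insert.mp h.1).elim h1 h2),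
            ind_neg (fun h => h1 h.1), ind_neg (fun h => h2 h.1)]
    · rw [ind_neg (fun h => hq h.2), ind_neg (fun h => hq h.2), ind_neg (fun h => hq h.2)]


lemma cnt_mono {s t : Multiset (ℝ × ℝ)} (h : s ≤ t) (p : ℝ × ℝ → Prop) :
    cnt s p ≤ cnt t p := by
  letI := Classical.decPred p
  unfold cnt
  exact Multiset.countP_le_of_le p h

lemma not_of_cnt_eq_zero {γ : Multiset (ℝ × ℝ)} {p : ℝ × ℝ → Prop}
    (h : cnt γ p = 0) {I : ℝ × ℝ} (hI : I ∈ γ) : ¬ p I := by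
  letI := Classical.decPred p
  unfold cnt at h
  rw [Multiset.countP_eq_zero] at h
  exact h I hI

lemma cnt_eq_card {γ : Multiset (ℝ × ℝ)} {p : ℝ × ℝ → Prop}
    (h : ∀ I ∈ γ, p I) : cnt γ p = Multiset.card γ := by
  letI := Classical.decPred p
  unfold cnt
  exact Multiset.countP_eq_card.mpr h

lemma cnt_eq_card_filter (γ : Multiset (ℝ × ℝ)) (p : ℝ × ℝ → Prop) :
    cnt γ p = Multiset.card (@Multiset.filter _ p (Classical.decPred p) γ) := by
  letI := Classical.decPred p
  unfold cnt
  exact Multiset.countP_eq_card_filter p γ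

lemma ind_split (P Q : Prop) : ind P = ind (P ∧ ¬ Q) + ind (P ∧ Q) := by
  by_cases hP : P <;> by_cases hQ : Q <;> simp [ind, hP, hQ]

lemma ind_split' (P Q : Prop) : ind P = ind (P ∧ Q) + ind (P ∧ ¬ Q) := by
  by_cases hP : P <;> by_cases hQ : Q <;> simp [ind, hP, hQ]

lemma ind_split4 (P Q : Prop) :
    ind True = ind (P ∧ ¬ Q) + ind (¬ P ∧ ¬ Q) + ind (P ∧ Q) + ind (¬ P ∧ Q) := by
  by_cases hP : P <;> by_cases hQ : Q <;> simp [ind, hP, hQ]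

lemma erase_notmem_split (A : Finset ℝ) (u t : ℝ) (hu : u ∈ A) (P : Prop) :
    ind (P ∧ t ∉ A.erase u) = ind (P ∧ t ∉ A) + ind (P ∧ t = u) := by
  by_cases c1 : P <;> by_cases c2 : t = u <;> by_cases c3 : t ∈ A <;>
    simp_all [ind, Finset.mem_erase]

lemma erase_mem_split (A : Finset ℝ) (u h : ℝ) (hu : u ∈ A) (P : Prop) :
    ind (P ∧ h ∈ A) = ind (P ∧ h ∈ A.erase u) + ind (P ∧ h = u) := by
  by_cases c1 : P <;> by_cases c2 : h = u <;> by_cases c3 : h ∈ A <;>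
    simp_all [ind, Finset.mem_erase]

lemma insert_notmem_split (A : Finset ℝ) (w t : ℝ) (hw : w ∉ A) (P : Prop) :
    ind (P ∧ t ∉ A) = ind (P ∧ t ∉ insert w A) + ind (P ∧ t = w) := by
  by_cases c1 : P <;> by_cases c2 : t = w <;> by_cases c3 : t ∈ A <;>
    simp_all [ind, Finset.mem_insert]

lemma insert_mem_split (A : Finset ℝ) (w h : ℝ) (hw : w ∉ A) (P : Prop) :
    ind (P ∧ h ∈ insert w A) = ind (P ∧ h ∈ A) + ind (P ∧ h = w) := by
  by_cases c1 : P <;> by_cases c2 : h = w <;> by_cases c3 : h ∈ A <;>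
    simp_all [ind, Finset.mem_insert]

set_option maxHeartbeats 1000000 in
lemma star_pointwise (A S : Finset ℝ) (v1 vM x y : ℝ)
    (hxS : x ∈ S) (hyS : y ∈ S)
    (hyv1 : y ≠ v1) (hxvM : x ≠ vM) (hv1vM : v1 ≠ vM) (hv1A : v1 ∉ A) (hvMA : vM ∈ A) :
    ind (y ∉ A ∧ x ∈ A) + ind (x = v1 ∧ y ∉ A) + ind (x = v1 ∧ y = vM)
      + ind (y = vM ∧ x ∈ A)
      ≤ ind (y ∈ insert vM ((S \ A).erase v1) ∧ x ∉ insert vM ((S \ A).erase v1)) := by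
  by_cases c1 : y ∈ A <;> by_cases c2 : x ∈ A <;> by_cases c3 : x = v1 <;>
    by_cases c4 : y = vM <;>
    simp_all [ind, Finset.mem_insert, Finset.mem_erase, Finset.mem_sdiff]

section Core

variable (γ : Multiset (ℝ × ℝ))

noncomputable def Ncut (A : Finset ℝ) : ℕ := cnt γ (fun I => I.2 ∈ A ∧ I.1 ∉ A)
noncomputable def cin (w : ℝ) (A : Finset ℝ) : ℕ := cnt γ (fun I => I.2 = w ∧ I.1 ∉ A)
noncomputable def cout (w : ℝ) (A : Finset ℝ) : ℕ := cnt γ (fun I => I.1 = w ∧ I.2 ∈ A)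
noncomputable def cAA (w : ℝ) (A : Finset ℝ) : ℕ := cnt γ (fun I => I.2 = w ∧ I.1 ∈ A)
noncomputable def cBB (w : ℝ) (A : Finset ℝ) : ℕ := cnt γ (fun I => I.1 = w ∧ I.2 ∉ A)

variable {γ}

lemma flip_erase (hne : ∀ I ∈ γ, I.1 ≠ I.2) {A : Finset ℝ} {u : ℝ} (hu : u ∈ A) :
    Ncut γ (A.erase u) + cin γ u A = Ncut γ A + cout γ u A := by
  refine cnt_add_eq_add γ _ _ _ _ (fun I hI => ?_)
  have h0 := hne I hI
  by_cases h1 : I.2 = u <;> by_cases h2 : I.1 = u <;> by_cases h3 : I.2 ∈ A <;>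
    by_cases h4 : I.1 ∈ A <;> simp_all [ind, Finset.mem_erase]

lemma flip_insert (hne : ∀ I ∈ γ, I.1 ≠ I.2) {A : Finset ℝ} {w : ℝ} (hw : w ∉ A) :
    Ncut γ (insert w A) + cout γ w A = Ncut γ A + cin γ w A := by
  refine cnt_add_eq_add γ _ _ _ _ (fun I hI => ?_)
  have h0 := hne I hI
  by_cases h1 : I.2 = w <;> by_cases h2 : I.1 = w <;> by_cases h3 : I.2 ∈ A <;>
    by_cases h4 : I.1 ∈ A <;> simp_all [ind, Finset.mem_insert]

lemma Ncut_eq_sum_cin (A : Finset ℝ) :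
    Ncut γ A = ∑ w ∈ A, cin γ w A := cnt_mem_eq_sum γ Prod.snd _ A

end Core

theorem adj_iff {I J : ℝ × ℝ} (hI : I.1 < I.2) (hJ : J.1 < J.2) :
    AdjI I J ↔ (I.2 = J.1 ∨ J.2 = I.1) := by
  unfold AdjI
  constructor
  · rintro ⟨x, hx⟩
    rw [Set.Icc_inter_Icc, Set.Icc_eq_singleton_iff] at hx
    obtain ⟨h1, h2⟩ := hx
    have hsupinf : I.1 ⊔ J.1 = I.2 ⊓ J.2 := h1.trans h2.symm
    rcases le_total I.1 J.1 with hab | hab <;> rcases le_total I.2 J.2 with hcd | hcd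
    · rw [sup_eq_right.mpr hab, inf_eq_left.mpr hcd] at hsupinf
      exact Or.inl hsupinf.symm
    · rw [sup_eq_right.mpr hab, inf_eq_right.mpr hcd] at hsupinf
      exact absurd hsupinf (ne_of_lt hJ)
    · rw [sup_eq_left.mpr hab, inf_eq_left.mpr hcd] at hsupinf
      exact absurd hsupinf (ne_of_lt hI)
    · rw [sup_eq_left.mpr hab, inf_eq_right.mpr hcd] at hsupinf
      exact Or.inr hsupinf.symm
  · rintro (h | h)
    · refine ⟨I.2, ?_⟩
      rw [Set.Icc_inter_Icc, Set.Icc_eq_singleton_iff]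
      constructor
      · rw [← h]; exact sup_eq_right.mpr hI.le
      · refine inf_eq_left.mpr ?_
        rw [h]; exact hJ.le
    · refine ⟨J.2, ?_⟩
      rw [Set.Icc_inter_Icc, Set.Icc_eq_singleton_iff]
      constructor
      · rw [← h]; exact sup_eq_left.mpr hJ.le
      · refine inf_eq_right.mpr ?_
        rw [h]; exact hI.le

end Stmt14Aux
open Stmt14Aux in
/-- If γ is a combination of closed intervals of positive length with α(γ) > 1, then
|γ| ≤ 4α(γ) − 3, expressed via an independent sub-multiset of maximal size. -/
theorem stmt_14 (γ : Multiset (ℝ × ℝ)) (hpos : ∀ I ∈ γ, I.1 < I.2)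
    (halpha : ∃ t ≤ γ, (∀ p ∈ t, ∀ q ∈ t, ¬ AdjI p q) ∧ 2 ≤ Multiset.card t) :
    ∃ t ≤ γ, (∀ p ∈ t, ∀ q ∈ t, ¬ AdjI p q) ∧
      Multiset.card γ ≤ 4 * Multiset.card t - 3 := by
  classical
  obtain ⟨t0, ht0le, ht0ind, ht0card⟩ := halpha
  have hne : ∀ I ∈ γ, I.1 ≠ I.2 := fun I hI => ne_of_lt (hpos I hI)
  -- the finite set of endpoint values
  set S : Finset ℝ := (γ.map Prod.fst).toFinset ∪ (γ.map Prod.snd).toFinset with hS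
  have hfstS : ∀ I ∈ γ, I.1 ∈ S := fun I hI => by
    apply Finset.mem_union_left
    rw [Multiset.mem_toFinset, Multiset.mem_map]
    exact ⟨I, hI, rfl⟩
  have hsndS : ∀ I ∈ γ, I.2 ∈ S := fun I hI => by
    apply Finset.mem_union_right
    rw [Multiset.mem_toFinset, Multiset.mem_map]
    exact ⟨I, hI, rfl⟩
  have hγne : ∃ I, I ∈ γ := by
    rw [← Multiset.card_pos_iff_exists_mem]
    have := Multiset.card_le_card ht0le
    omega
  have hSne : S.Nonempty := by
    obtain ⟨I, hI⟩ := hγne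
    exact ⟨I.1, hfstS I hI⟩
  set v1 : ℝ := S.min' hSne with hv1def
  set vM : ℝ := S.max' hSne with hvMdef
  have hv1S : v1 ∈ S := S.min'_mem hSne
  have hvMS : vM ∈ S := S.max'_mem hSne
  have hv1min : ∀ x ∈ S, v1 ≤ x := fun x hx => S.min'_le x hx
  have hvMmax : ∀ x ∈ S, x ≤ vM := fun x hx => S.le_max' x hx
  have hv1M : v1 < vM := by
    obtain ⟨I, hI⟩ := hγne
    calc v1 ≤ I.1 := hv1min _ (hfstS I hI)
    _ < I.2 := hpos I hI
    _ ≤ vM := hvMmax _ (hsndS I hI)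
  have hv1nothead : ∀ I ∈ γ, I.2 ≠ v1 := fun I hI h => by
    have := hv1min I.1 (hfstS I hI)
    have := hpos I hI
    rw [h] at this
    linarith
  have hvMnottail : ∀ I ∈ γ, I.1 ≠ vM := fun I hI h => by
    have := hvMmax I.2 (hsndS I hI)
    have := hpos I hI
    rw [h] at this
    linarith
  have hv1tail : ∃ I ∈ γ, I.1 = v1 := by
    rcases Finset.mem_union.mp hv1S with h | h <;>
      rw [Multiset.mem_toFinset, Multiset.mem_map] at h <;> obtain ⟨I, hI, hIe⟩ := h
    · exact ⟨I, hI, hIe⟩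
    · exact absurd hIe (hv1nothead I hI)
  have hvMhead : ∃ I ∈ γ, I.2 = vM := by
    rcases Finset.mem_union.mp hvMS with h | h <;>
      rw [Multiset.mem_toFinset, Multiset.mem_map] at h <;> obtain ⟨I, hI, hIe⟩ := h
    · exact absurd hIe (hvMnottail I hI)
    · exact ⟨I, hI, hIe⟩
  -- the maximum cut
  obtain ⟨Amax, hAmaxmem, hAmaxmax⟩ :=
    Finset.exists_max_image S.powerset (fun A => Ncut γ A) ⟨∅, by simp⟩
  set α : ℕ := Ncut γ Amax with hαdef
  have hmaxall : ∀ A : Finset ℝ, A ⊆ S → Ncut γ A ≤ α :=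
    fun A hA => hAmaxmax A (Finset.mem_powerset.mpr hA)
  have hAmaxS : Amax ⊆ S := Finset.mem_powerset.mp hAmaxmem
  -- α ≥ 2 from the independent submultiset
  have hα2 : 2 ≤ α := by
    set At : Finset ℝ := (t0.map Prod.snd).toFinset with hAt
    have hAtS : At ⊆ S := by
      intro x hx
      rw [hAt, Multiset.mem_toFinset, Multiset.mem_map] at hx
      obtain ⟨I, hI, hIe⟩ := hx
      exact hIe ▸ hsndS I (Multiset.mem_of_le ht0le hI)
    have hcard : cnt t0 (fun I => I.2 ∈ At ∧ I.1 ∉ At) = Multiset.card t0 := by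
      refine cnt_eq_card (fun I hI => ⟨?_, ?_⟩)
      · rw [hAt, Multiset.mem_toFinset, Multiset.mem_map]
        exact ⟨I, hI, rfl⟩
      · intro hmem
        rw [hAt, Multiset.mem_toFinset, Multiset.mem_map] at hmem
        obtain ⟨J, hJ, hJe⟩ := hmem
        refine ht0ind J hJ I hI ?_
        have hJγ := Multiset.mem_of_le ht0le hJ
        have hIγ := Multiset.mem_of_le ht0le hI
        exact (adj_iff (hpos J hJγ) (hpos I hIγ)).mpr (Or.inl hJe)
    have h1 : cnt t0 (fun I => I.2 ∈ At ∧ I.1 ∉ At) ≤ Ncut γ At := cnt_mono ht0le _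
    have h2 := hmaxall At hAtS
    rw [hcard] at h1
    omega
  -- main bound, by contradiction
  have hmain : Multiset.card γ + 3 ≤ 4 * α := by
    by_contra hcon'
    have hcon : 4 * α ≤ Multiset.card γ + 2 := by omega
    -- rigidity lemma
    have R : ∀ A : Finset ℝ, A ⊆ S → v1 ∉ A → vM ∈ A → Ncut γ A = α →
        (∀ u ∈ A, u ≠ vM → cin γ u A = cout γ u A) ∧
        (∀ w ∈ S, w ∉ A → w ≠ v1 → cin γ w A = cout γ w A) ∧
        cAA γ vM A + cBB γ v1 A ≤ 2 := by
      intro A hAS hA1 hAM hNA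
      have hloA : ∀ u ∈ A, cout γ u A ≤ cin γ u A := by
        intro u hu
        have h1 := flip_erase hne hu
        have h2 := hmaxall (A.erase u) ((Finset.erase_subset u A).trans hAS)
        omega
      have hloB : ∀ w ∈ S, w ∉ A → cin γ w A ≤ cout γ w A := by
        intro w hwS hw
        have h1 := flip_insert hne hw
        have h2 := hmaxall (insert w A) (Finset.insert_subset hwS hAS)
        omega
      have e1 : cin γ vM A + ∑ u ∈ A.erase vM, cin γ u A = Ncut γ A := by
        rw [Ncut_eq_sum_cin A]
        exact Finset.add_sum_erase A (fun u => cin γ u A) hAM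
      have e2 : cnt γ (fun I => I.2 ∈ A ∧ I.1 ∈ A)
          = cout γ vM A + ∑ u ∈ A.erase vM, cout γ u A := by
        have h0 : cnt γ (fun I => I.2 ∈ A ∧ I.1 ∈ A)
            = cnt γ (fun I => I.1 ∈ A ∧ I.2 ∈ A) := cnt_congr γ (fun I hI => and_comm)
        rw [h0, cnt_mem_eq_sum γ Prod.fst _ A]
        exact (Finset.add_sum_erase A (fun u => cout γ u A) hAM).symm
      have hcoutM : cout γ vM A = 0 := cnt_eq_zero γ (fun I hI h => hvMnottail I hI h.1)
      have hK1 : (∑ u ∈ A.erase vM, cout γ u A)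
          + (∑ u ∈ A.erase vM, (cin γ u A - cout γ u A)) = ∑ u ∈ A.erase vM, cin γ u A := by
        rw [← Finset.sum_add_distrib]
        exact Finset.sum_congr rfl
          (fun u hu => Nat.add_sub_cancel' (hloA u (Finset.mem_of_mem_erase hu)))
      have hv1SdA : v1 ∈ S \ A := Finset.mem_sdiff.mpr ⟨hv1S, hA1⟩
      have e3 : cout γ v1 A + ∑ u ∈ (S \ A).erase v1, cout γ u A = Ncut γ A := by
        have h0 : Ncut γ A = cnt γ (fun I => I.1 ∈ S \ A ∧ I.2 ∈ A) := by
          refine cnt_congr γ (fun I hI => ?_)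
          rw [Finset.mem_sdiff]
          have h1 := hfstS I hI
          constructor
          · rintro ⟨h2, h3⟩; exact ⟨⟨h1, h3⟩, h2⟩
          · rintro ⟨⟨_, h3⟩, h2⟩; exact ⟨h2, h3⟩
        rw [h0, cnt_mem_eq_sum γ Prod.fst _ (S \ A)]
        exact Finset.add_sum_erase _ (fun u => cout γ u A) hv1SdA
      have hcinv1 : cin γ v1 A = 0 := cnt_eq_zero γ (fun I hI h => hv1nothead I hI h.1)
      have e4 : cnt γ (fun I => I.2 ∉ A ∧ I.1 ∉ A)
          = cin γ v1 A + ∑ u ∈ (S \ A).erase v1, cin γ u A := by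
        have h0 : cnt γ (fun I => I.2 ∉ A ∧ I.1 ∉ A)
            = cnt γ (fun I => I.2 ∈ S \ A ∧ I.1 ∉ A) := by
          refine cnt_congr γ (fun I hI => ?_)
          rw [Finset.mem_sdiff]
          have h1 := hsndS I hI
          tauto
        rw [h0, cnt_mem_eq_sum γ Prod.snd _ (S \ A)]
        exact (Finset.add_sum_erase _ (fun u => cin γ u A) hv1SdA).symm
      have hK2 : (∑ u ∈ (S \ A).erase v1, cin γ u A)
          + (∑ u ∈ (S \ A).erase v1, (cout γ u A - cin γ u A))
          = ∑ u ∈ (S \ A).erase v1, cout γ u A := by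
        rw [← Finset.sum_add_distrib]
        refine Finset.sum_congr rfl (fun w hw => ?_)
        have hw' := Finset.mem_of_mem_erase hw
        rw [Finset.mem_sdiff] at hw'
        exact Nat.add_sub_cancel' (hloB w hw'.1 hw'.2)
      have hstar : cnt γ (fun I => I.2 ∉ A ∧ I.1 ∈ A) + cBB γ v1 A
          + cnt γ (fun I => I.1 = v1 ∧ I.2 = vM) + cAA γ vM A ≤ α := by
        have hsub : insert vM ((S \ A).erase v1) ⊆ S :=
          Finset.insert_subset hvMS ((Finset.erase_subset _ _).trans Finset.sdiff_subset)
        refine le_trans ?_ (hmaxall _ hsub)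
        refine cnt_add4_le γ _ _ _ _ _ (fun I hI => ?_)
        exact star_pointwise A S v1 vM I.1 I.2 (hfstS I hI) (hsndS I hI)
          (hv1nothead I hI) (hvMnottail I hI) (ne_of_lt hv1M) hA1 hAM
      have hdegM : 1 ≤ cin γ vM A + cAA γ vM A := by
        have h1 : 1 ≤ cnt γ (fun I => I.2 = vM) := cnt_pos γ hvMhead
        have h2 : cnt γ (fun I => I.2 = vM) = cin γ vM A + cAA γ vM A := by
          exact cnt_eq_add γ _ _ _ (fun I hI => ind_split (I.2 = vM) (I.1 ∈ A))
        omega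
      have hdegv1 : 1 ≤ cout γ v1 A + cBB γ v1 A := by
        have h1 : 1 ≤ cnt γ (fun I => I.1 = v1) := cnt_pos γ hv1tail
        have h2 : cnt γ (fun I => I.1 = v1) = cout γ v1 A + cBB γ v1 A := by
          exact cnt_eq_add γ _ _ _ (fun I hI => ind_split' (I.1 = v1) (I.2 ∈ A))
        omega
      have hmsplit : Multiset.card γ = Ncut γ A + cnt γ (fun I => I.2 ∉ A ∧ I.1 ∉ A)
          + cnt γ (fun I => I.2 ∈ A ∧ I.1 ∈ A) + cnt γ (fun I => I.2 ∉ A ∧ I.1 ∈ A) := by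
        rw [← cnt_true γ]
        exact cnt_eq_add4 γ _ _ _ _ _ (fun I hI => ind_split4 (I.2 ∈ A) (I.1 ∈ A))
      have hK1z : (∑ u ∈ A.erase vM, (cin γ u A - cout γ u A)) = 0 := by omega
      have hK2z : (∑ u ∈ (S \ A).erase v1, (cout γ u A - cin γ u A)) = 0 := by omega
      refine ⟨?_, ?_, by omega⟩
      · intro u hu huM
        have h1 := Finset.sum_eq_zero_iff.mp hK1z u (Finset.mem_erase.mpr ⟨huM, hu⟩)
        have h2 := hloA u hu
        omega
      · intro w hwS hwA hwv1
        have h1 := Finset.sum_eq_zero_iff.mp hK2z w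
          (Finset.mem_erase.mpr ⟨hwv1, Finset.mem_sdiff.mpr ⟨hwS, hwA⟩⟩)
        have h2 := hloB w hwS hwA
        omega
    -- construct a maximum cut containing vM and avoiding v1
    set A1 : Finset ℝ := Amax.erase v1 with hA1def
    have hA1S : A1 ⊆ S := (Finset.erase_subset _ _).trans hAmaxS
    have hNA1 : Ncut γ A1 = α := by
      by_cases h : v1 ∈ Amax
      · have h1 := flip_erase hne h
        have hc : cin γ v1 Amax = 0 := cnt_eq_zero γ (fun I hI hh => hv1nothead I hI hh.1)
        have h2 := hmaxall A1 hA1S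
        rw [← hA1def] at h1
        omega
      · rw [hA1def, Finset.erase_eq_of_notMem h]
    set A0 : Finset ℝ := insert vM A1 with hA0def
    have hA0S : A0 ⊆ S := Finset.insert_subset hvMS hA1S
    have hv1A1 : v1 ∉ A1 := Finset.notMem_erase _ _
    have hv1A0 : v1 ∉ A0 := by
      rw [hA0def, Finset.mem_insert]
      push_neg
      exact ⟨ne_of_lt hv1M, hv1A1⟩
    have hvMA0 : vM ∈ A0 := Finset.mem_insert_self _ _
    have hNA0 : Ncut γ A0 = α := by
      by_cases h : vM ∈ A1
      · rw [hA0def, Finset.insert_eq_self.mpr h]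
        exact hNA1
      · have h1 := flip_insert hne h
        have hc : cout γ vM A1 = 0 := cnt_eq_zero γ (fun I hI hh => hvMnottail I hI hh.1)
        have h2 := hmaxall A0 hA0S
        rw [← hA0def] at h1
        omega
    obtain ⟨RC1, RC2, RC3⟩ := R A0 hA0S hv1A0 hvMA0 hNA0
    have hErase : ∀ u ∈ A0, u ≠ vM → Ncut γ (A0.erase u) = α := by
      intro u hu huM
      have h1 := flip_erase hne hu
      have h2 := RC1 u hu huM
      omega
    have hInsert : ∀ w ∈ S, w ∉ A0 → w ≠ v1 → Ncut γ (insert w A0) = α := by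
      intro w hwS hw hwv1
      have h1 := flip_insert hne hw
      have h2 := RC2 w hwS hw hwv1
      omega
    -- step A: no edges within A0 \ {vM}
    have stepA : ∀ u1 ∈ A0, u1 ≠ vM → ∀ u2 ∈ A0, u2 ≠ vM → u1 ≠ u2 →
        cnt γ (fun I => I.1 = u1 ∧ I.2 = u2) = 0 := by
      intro u1 hu1 hu1M u2 hu2 hu2M hne12
      have hu2' : u2 ∈ A0.erase u1 := Finset.mem_erase.mpr ⟨Ne.symm hne12, hu2⟩
      obtain ⟨RC1', _, _⟩ := R (A0.erase u1) ((Finset.erase_subset _ _).trans hA0S)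
        (fun h => hv1A0 (Finset.mem_of_mem_erase h))
        (Finset.mem_erase.mpr ⟨Ne.symm hu1M, hvMA0⟩) (hErase u1 hu1 hu1M)
      have g1 := RC1 u2 hu2 hu2M
      have g2 := RC1' u2 hu2' hu2M
      have s1 : cin γ u2 (A0.erase u1)
          = cin γ u2 A0 + cnt γ (fun I => I.2 = u2 ∧ I.1 = u1) :=
        cnt_eq_add γ _ _ _ (fun I _ => erase_notmem_split A0 u1 I.1 hu1 (I.2 = u2))
      have s2 : cout γ u2 A0
          = cout γ u2 (A0.erase u1) + cnt γ (fun I => I.1 = u2 ∧ I.2 = u1) :=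
        cnt_eq_add γ _ _ _ (fun I _ => erase_mem_split A0 u1 I.2 hu1 (I.1 = u2))
      have hc : cnt γ (fun I => I.1 = u1 ∧ I.2 = u2)
          = cnt γ (fun I => I.2 = u2 ∧ I.1 = u1) := cnt_congr γ (fun I _ => and_comm)
      omega
    -- step B: no edges within (S \ A0) \ {v1}
    have stepB : ∀ w1 ∈ S, w1 ∉ A0 → w1 ≠ v1 → ∀ w2 ∈ S, w2 ∉ A0 → w2 ≠ v1 → w1 ≠ w2 →
        cnt γ (fun I => I.1 = w1 ∧ I.2 = w2) = 0 := by
      intro w1 hw1S hw1 hw1v w2 hw2S hw2 hw2v hne12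
      obtain ⟨_, RC2', _⟩ := R (insert w1 A0) (Finset.insert_subset hw1S hA0S)
        (by
          rw [Finset.mem_insert]
          push_neg
          exact ⟨Ne.symm hw1v, hv1A0⟩)
        (Finset.mem_insert_of_mem hvMA0) (hInsert w1 hw1S hw1 hw1v)
      have g1 := RC2 w2 hw2S hw2 hw2v
      have g2 := RC2' w2 hw2S
        (by
          rw [Finset.mem_insert]
          push_neg
          exact ⟨Ne.symm hne12, hw2⟩) hw2v
      have s1 : cin γ w2 A0
          = cin γ w2 (insert w1 A0) + cnt γ (fun I => I.2 = w2 ∧ I.1 = w1) :=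
        cnt_eq_add γ _ _ _ (fun I _ => insert_notmem_split A0 w1 I.1 hw1 (I.2 = w2))
      have s2 : cout γ w2 (insert w1 A0)
          = cout γ w2 A0 + cnt γ (fun I => I.1 = w2 ∧ I.2 = w1) :=
        cnt_eq_add γ _ _ _ (fun I _ => insert_mem_split A0 w1 I.2 hw1 (I.1 = w2))
      have hc : cnt γ (fun I => I.1 = w1 ∧ I.2 = w2)
          = cnt γ (fun I => I.2 = w2 ∧ I.1 = w1) := cnt_congr γ (fun I _ => and_comm)
      omega
    -- step C: no edges from A0 \ {vM} to (S \ A0) \ {v1}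
    have stepC : ∀ u ∈ A0, u ≠ vM → ∀ w ∈ S, w ∉ A0 → w ≠ v1 →
        cnt γ (fun I => I.1 = u ∧ I.2 = w) = 0 := by
      intro u hu huM w hwS hw hwv
      obtain ⟨_, RC2', _⟩ := R (A0.erase u) ((Finset.erase_subset _ _).trans hA0S)
        (fun h => hv1A0 (Finset.mem_of_mem_erase h))
        (Finset.mem_erase.mpr ⟨Ne.symm huM, hvMA0⟩) (hErase u hu huM)
      have g1 := RC2 w hwS hw hwv
      have g2 := RC2' w hwS (fun h => hw (Finset.mem_of_mem_erase h)) hwv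
      have s1 : cin γ w (A0.erase u)
          = cin γ w A0 + cnt γ (fun I => I.2 = w ∧ I.1 = u) :=
        cnt_eq_add γ _ _ _ (fun I _ => erase_notmem_split A0 u I.1 hu (I.2 = w))
      have s2 : cout γ w A0
          = cout γ w (A0.erase u) + cnt γ (fun I => I.1 = w ∧ I.2 = u) :=
        cnt_eq_add γ _ _ _ (fun I _ => erase_mem_split A0 u I.2 hu (I.1 = w))
      have hc : cnt γ (fun I => I.1 = u ∧ I.2 = w)
          = cnt γ (fun I => I.2 = w ∧ I.1 = u) := cnt_congr γ (fun I _ => and_comm)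
      omega
    -- final counting
    have hmsplit : Multiset.card γ = Ncut γ A0 + cnt γ (fun I => I.2 ∉ A0 ∧ I.1 ∉ A0)
        + cnt γ (fun I => I.2 ∈ A0 ∧ I.1 ∈ A0) + cnt γ (fun I => I.2 ∉ A0 ∧ I.1 ∈ A0) := by
      rw [← cnt_true γ]
      exact cnt_eq_add4 γ _ _ _ _ _ (fun I _ => ind_split4 (I.2 ∈ A0) (I.1 ∈ A0))
    have hn2le : cnt γ (fun I => I.2 ∉ A0 ∧ I.1 ∉ A0) ≤ cBB γ v1 A0 := by
      refine cnt_le_cnt γ _ _ (fun I hI => ?_)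
      by_cases c1 : I.2 ∈ A0
      · rw [ind_neg (fun h => h.1 c1)]
        exact Nat.zero_le _
      · by_cases c2 : I.1 ∈ A0
        · rw [ind_neg (fun h => h.2 c2)]
          exact Nat.zero_le _
        · have ht : I.1 = v1 := by
            by_contra hne1
            have h0 := stepB I.1 (hfstS I hI) c2 hne1 I.2 (hsndS I hI) c1
              (hv1nothead I hI) (hne I hI)
            exact not_of_cnt_eq_zero h0 hI ⟨rfl, rfl⟩
          rw [ind_pos ⟨c1, c2⟩, ind_pos ⟨ht, c1⟩]
    have hn3le : cnt γ (fun I => I.2 ∈ A0 ∧ I.1 ∈ A0) ≤ cAA γ vM A0 := by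
      refine cnt_le_cnt γ _ _ (fun I hI => ?_)
      by_cases c1 : I.2 ∈ A0
      · by_cases c2 : I.1 ∈ A0
        · have hh : I.2 = vM := by
            by_contra hne2
            have h0 := stepA I.1 c2 (hvMnottail I hI) I.2 c1 hne2 (hne I hI)
            exact not_of_cnt_eq_zero h0 hI ⟨rfl, rfl⟩
          rw [ind_pos ⟨c1, c2⟩, ind_pos ⟨hh, c2⟩]
        · rw [ind_neg (fun h => c2 h.2)]
          exact Nat.zero_le _
      · rw [ind_neg (fun h => c1 h.1)]
        exact Nat.zero_le _
    have hn4z : cnt γ (fun I => I.2 ∉ A0 ∧ I.1 ∈ A0) = 0 := by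
      refine cnt_eq_zero γ (fun I hI h => ?_)
      have h0 := stepC I.1 h.2 (hvMnottail I hI) I.2 (hsndS I hI) h.1 (hv1nothead I hI)
      exact not_of_cnt_eq_zero h0 hI ⟨rfl, rfl⟩
    omega
  -- conclusion
  set p : ℝ × ℝ → Prop := fun I => I.2 ∈ Amax ∧ I.1 ∉ Amax with hp
  refine ⟨@Multiset.filter _ p (Classical.decPred p) γ, @Multiset.filter_le _ p (Classical.decPred p) γ, ?_, ?_⟩
  · intro a ha b hb hadj
    have ha' := @Multiset.mem_filter _ p (Classical.decPred p) _ _ |>.mp ha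
    have hb' := @Multiset.mem_filter _ p (Classical.decPred p) _ _ |>.mp hb
    rcases (adj_iff (hpos a ha'.1) (hpos b hb'.1)).mp hadj with h | h
    · exact hb'.2.2 (h ▸ ha'.2.1)
    · exact ha'.2.2 (h ▸ hb'.2.1)
  · have hcard : Multiset.card (@Multiset.filter _ p (Classical.decPred p) γ) = α := by
      rw [← cnt_eq_card_filter γ p]
      rfl
    rw [hcard]
    omega
end

section
/- For every n ≥ 2, the maximum cardinality b_n of a family of pairwise adjacent n-boxes satisfies b_n ≤ 4·b_{n−1} − 3. -/
def AdjBox {n : ℕ} (I J : Fin n → ℝ × ℝ) : Prop := ∃ i, AdjI (I i) (J i)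

lemma adjI_iff' {p q : ℝ × ℝ} (hp : p.1 < p.2) (hq : q.1 < q.2) :
    (∃ x : ℝ, Set.Icc p.1 p.2 ∩ Set.Icc q.1 q.2 = {x}) ↔ (p.2 = q.1 ∨ q.2 = p.1) := by
  constructor
  · rintro ⟨x, hx⟩
    rw [Set.Icc_inter_Icc] at hx
    have hxmem : x ∈ Set.Icc (p.1 ⊔ q.1) (p.2 ⊓ q.2) := by rw [hx]; exact rfl
    have hle : p.1 ⊔ q.1 ≤ p.2 ⊓ q.2 := le_trans hxmem.1 hxmem.2
    have h1 : p.1 ⊔ q.1 ∈ ({x} : Set ℝ) := by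
      rw [← hx]; exact ⟨le_refl _, hle⟩
    have h2 : p.2 ⊓ q.2 ∈ ({x} : Set ℝ) := by
      rw [← hx]; exact ⟨hle, le_refl _⟩
    have hM : p.1 ⊔ q.1 = p.2 ⊓ q.2 := by
      rw [Set.mem_singleton_iff] at h1 h2; rw [h1, h2]
    rcases le_total p.1 q.1 with h | h
    · rw [sup_eq_right.2 h] at hM
      rcases le_total p.2 q.2 with h' | h'
      · rw [inf_eq_left.2 h'] at hM; exact Or.inl hM.symm
      · rw [inf_eq_right.2 h'] at hM; exact absurd hM hq.ne
    · rw [sup_eq_left.2 h] at hM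
      rcases le_total p.2 q.2 with h' | h'
      · rw [inf_eq_left.2 h'] at hM; exact absurd hM hp.ne
      · rw [inf_eq_right.2 h'] at hM; exact Or.inr hM.symm
  · rintro (h | h)
    · refine ⟨p.2, ?_⟩
      rw [Set.Icc_inter_Icc]
      have h1 : p.1 ⊔ q.1 = q.1 := sup_eq_right.2 (by rw [← h]; exact hp.le)
      have h2 : p.2 ⊓ q.2 = p.2 := inf_eq_left.2 (by rw [h]; exact hq.le)
      rw [h1, h2, ← h, Set.Icc_self]
    · refine ⟨q.2, ?_⟩
      rw [Set.Icc_inter_Icc]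
      have h1 : p.1 ⊔ q.1 = p.1 := sup_eq_left.2 (by rw [← h]; exact hq.le)
      have h2 : p.2 ⊓ q.2 = q.2 := inf_eq_right.2 (by rw [h]; exact hp.le)
      rw [h1, h2, ← h, Set.Icc_self]

open Finset in
lemma card_filter_notMem' (J : Finset ℝ) (x : ℝ) (hx : x ∈ J) :
    (J.powerset.filter (fun P => x ∉ P)).card = 2 ^ (J.card - 1) := by
  classical
  have h : J.powerset.filter (fun P => x ∉ P) = (J.erase x).powerset := by
    ext P
    simp only [Finset.mem_filter, Finset.mem_powerset, Finset.subset_erase]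
  rw [h, Finset.card_powerset, Finset.card_erase_of_mem hx]

open Finset in
lemma card_filter_mem' (J : Finset ℝ) (x : ℝ) (hx : x ∈ J) :
    (J.powerset.filter (fun P => x ∈ P)).card = 2 ^ (J.card - 1) := by
  classical
  have h := Finset.card_filter_add_card_filter_not (s := J.powerset)
    (p := fun P => x ∈ P)
  rw [Finset.card_powerset] at h
  have h2 : (J.powerset.filter (fun P => ¬ x ∈ P)).card = 2 ^ (J.card - 1) :=
    card_filter_notMem' J x hx
  have hc : 1 ≤ J.card := Finset.card_pos.2 ⟨x, hx⟩
  have h3 : 2 ^ J.card = 2 ^ (J.card - 1) * 2 := by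
    rw [← pow_succ]
    congr 1
    omega
  omega

open Finset in
lemma card_filter_mem_notMem' (J : Finset ℝ) (x y : ℝ) (hx : x ∈ J) (hy : y ∈ J)
    (hxy : x ≠ y) :
    (J.powerset.filter (fun P => x ∈ P ∧ y ∉ P)).card = 2 ^ (J.card - 2) := by
  classical
  have h : J.powerset.filter (fun P => x ∈ P ∧ y ∉ P)
      = (J.erase y).powerset.filter (fun P => x ∈ P) := by
    ext P
    simp only [Finset.mem_filter, Finset.mem_powerset, Finset.subset_erase]
    tauto
  rw [h, card_filter_mem' _ x (Finset.mem_erase.2 ⟨hxy, hx⟩), Finset.card_erase_of_mem hy]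
  congr 1


lemma adjI_iff {p q : ℝ × ℝ} (hp : p.1 < p.2) (hq : q.1 < q.2) :
    AdjI p q ↔ (p.2 = q.1 ∨ q.2 = p.1) := adjI_iff' hp hq

/-- b_n ≤ 4·b_{n−1} − 3 for n ≥ 2: if every nearly neighbourly family of (n−1)-boxes
has at most m elements, then every nearly neighbourly family of n-boxes has at most
4m − 3 elements. -/
theorem stmt_15 (n : ℕ) (hn : 2 ≤ n) (m : ℕ)
    (hb : ∀ S : Finset (Fin (n - 1) → ℝ × ℝ),
      (∀ I ∈ S, ∀ i, (I i).1 < (I i).2) →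
      (∀ I ∈ S, ∀ J ∈ S, I ≠ J → AdjBox I J) → S.card ≤ m) :
    ∀ S : Finset (Fin n → ℝ × ℝ),
      (∀ I ∈ S, ∀ i, (I i).1 < (I i).2) →
      (∀ I ∈ S, ∀ J ∈ S, I ≠ J → AdjBox I J) → S.card ≤ 4 * m - 3 := by
  classical
  have hpos : 0 < n - 1 := by omega
  -- m ≥ 2
  have hm2 : 2 ≤ m := by
    set K1 : Fin (n-1) → ℝ × ℝ := fun _ => ((0:ℝ),(1:ℝ)) with hK1
    set K2 : Fin (n-1) → ℝ × ℝ := fun _ => ((1:ℝ),(2:ℝ)) with hK2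
    have hne : K1 ≠ K2 := by
      intro h
      have h0 := congrFun h ⟨0, hpos⟩
      rw [hK1, hK2] at h0
      have := congrArg Prod.fst h0
      norm_num at this
    have hx : AdjI ((0:ℝ),(1:ℝ)) ((1:ℝ),(2:ℝ)) := by
      refine ⟨1, ?_⟩
      rw [show (((0:ℝ),(1:ℝ)) : ℝ × ℝ).1 = (0:ℝ) from rfl]
      rw [Set.Icc_inter_Icc]
      have e1 : (0:ℝ) ⊔ 1 = 1 := sup_eq_right.2 (by norm_num)
      have e2 : (1:ℝ) ⊓ 2 = 1 := inf_eq_left.2 (by norm_num)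
      simp only [e1, e2]
      exact Set.Icc_self 1
    have hy : AdjI ((1:ℝ),(2:ℝ)) ((0:ℝ),(1:ℝ)) := by
      refine ⟨1, ?_⟩
      rw [Set.Icc_inter_Icc]
      have e1 : (1:ℝ) ⊔ 0 = 1 := sup_eq_left.2 (by norm_num)
      have e2 : (2:ℝ) ⊓ 1 = 1 := inf_eq_right.2 (by norm_num)
      simp only [e1, e2]
      exact Set.Icc_self 1
    have hnd : ∀ I ∈ ({K1, K2} : Finset (Fin (n-1) → ℝ × ℝ)), ∀ i, (I i).1 < (I i).2 := by
      intro I hI i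
      rcases Finset.mem_insert.1 hI with h | h
      · rw [h, hK1]; norm_num
      · rw [Finset.mem_singleton.1 h, hK2]; norm_num
    have hadj : ∀ I ∈ ({K1, K2} : Finset (Fin (n-1) → ℝ × ℝ)),
        ∀ Jb ∈ ({K1, K2} : Finset (Fin (n-1) → ℝ × ℝ)), I ≠ Jb → AdjBox I Jb := by
      intro I hI Jb hJ hIJ
      have hI' : I = K1 ∨ I = K2 := by
        rcases Finset.mem_insert.1 hI with h | h
        · exact Or.inl h
        · exact Or.inr (Finset.mem_singleton.1 h)
      have hJ' : Jb = K1 ∨ Jb = K2 := by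
        rcases Finset.mem_insert.1 hJ with h | h
        · exact Or.inl h
        · exact Or.inr (Finset.mem_singleton.1 h)
      rcases hI' with rfl | rfl <;> rcases hJ' with rfl | rfl
      · exact absurd rfl hIJ
      · exact ⟨⟨0, hpos⟩, by rw [hK1, hK2]; exact hx⟩
      · exact ⟨⟨0, hpos⟩, by rw [hK1, hK2]; exact hy⟩
      · exact absurd rfl hIJ
    have hle := hb {K1, K2} hnd hadj
    rw [Finset.card_pair hne] at hle
    exact hle
  intro S hS hS2
  by_contra hN
  push_neg at hN
  have hN6 : 6 ≤ S.card := by omega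
  set lastIdx : Fin n := ⟨n-1, by omega⟩ with hlast
  set hdf : (Fin n → ℝ × ℝ) → ℝ := fun e => (e lastIdx).2 with hhdf
  set tlf : (Fin n → ℝ × ℝ) → ℝ := fun e => (e lastIdx).1 with htlf
  have htlhd : ∀ e ∈ S, tlf e < hdf e := by
    intro e he
    simp only [hhdf, htlf]
    exact hS e he lastIdx
  set J : Finset ℝ := (S.image hdf) ∩ (S.image tlf) with hJ
  -- projection bound
  have key : ∀ T : Finset (Fin n → ℝ × ℝ), T ⊆ S →
      (∀ x ∈ T, ∀ y ∈ T, x ≠ y → ¬ AdjI (x lastIdx) (y lastIdx)) → T.card ≤ m := by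
    intro T hTS hTind
    set π : (Fin n → ℝ × ℝ) → (Fin (n-1) → ℝ × ℝ) :=
      fun I => fun j : Fin (n-1) => I ⟨j.1, by have := j.2; omega⟩ with hπ
    have hinj : Set.InjOn π T := by
      intro x hx y hy hxy
      by_contra hne
      obtain ⟨i, hi⟩ := hS2 x (hTS hx) y (hTS hy) hne
      rcases i with ⟨iv, hlt⟩
      by_cases hil : iv = n - 1
      · subst hil
        exact hTind x hx y hy hne hi
      · have hiv : iv < n - 1 := by omega
        have h3 := congrFun hxy (⟨iv, hiv⟩ : Fin (n-1))
        simp only [hπ] at h3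
        have h4 : x ⟨iv, hlt⟩ = y ⟨iv, hlt⟩ := h3
        rw [h4] at hi
        have hq := hS y (hTS hy) ⟨iv, hlt⟩
        rcases (adjI_iff hq hq).1 hi with h | h <;> linarith
    have hcard : T.card = (T.image π).card := (Finset.card_image_of_injOn hinj).symm
    rw [hcard]
    apply hb
    · intro I' hI' j
      obtain ⟨I, hIT, rfl⟩ := Finset.mem_image.1 hI'
      simp only [hπ]
      exact hS I (hTS hIT) _
    · intro I' hI' J' hJ' hne'
      obtain ⟨I, hIT, rfl⟩ := Finset.mem_image.1 hI'
      obtain ⟨Jb, hJT, rfl⟩ := Finset.mem_image.1 hJ'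
      have hIJ : I ≠ Jb := by rintro rfl; exact hne' rfl
      obtain ⟨i, hi⟩ := hS2 I (hTS hIT) Jb (hTS hJT) hIJ
      rcases i with ⟨iv, hlt⟩
      by_cases hil : iv = n - 1
      · exfalso
        subst hil
        exact hTind I hIT Jb hJT hIJ hi
      · have hiv : iv < n - 1 := by omega
        refine ⟨⟨iv, hiv⟩, ?_⟩
        simp only [hπ]
        exact hi
  by_cases hJe : J = ∅
  · -- no junctions: S itself is independent in the last coordinate
    have hSm : S.card ≤ m := by
      apply key S (Finset.Subset.refl S)
      intro x hx y hy hne hadj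
      rcases (adjI_iff (hS x hx lastIdx) (hS y hy lastIdx)).1 hadj with h | h
      · have h' : hdf x = tlf y := by simp only [hhdf, htlf]; exact h
        have : hdf x ∈ J := by
          rw [hJ]
          refine Finset.mem_inter.2 ⟨Finset.mem_image_of_mem _ hx, ?_⟩
          rw [h']
          exact Finset.mem_image_of_mem _ hy
        rw [hJe] at this
        exact Finset.notMem_empty _ this
      · have h' : hdf y = tlf x := by simp only [hhdf, htlf]; exact h
        have : hdf y ∈ J := by
          rw [hJ]
          refine Finset.mem_inter.2 ⟨Finset.mem_image_of_mem _ hy, ?_⟩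
          rw [h']
          exact Finset.mem_image_of_mem _ hx
        rw [hJe] at this
        exact Finset.notMem_empty _ this
    omega
  · have hJne : J.Nonempty := Finset.nonempty_iff_ne_empty.2 hJe
    set F : Finset ℝ → Finset (Fin n → ℝ × ℝ) :=
      fun P => S.filter (fun e => (hdf e ∈ J → hdf e ∈ P) ∧ (tlf e ∈ J → tlf e ∉ P)) with hFdef
    set cnt : (Fin n → ℝ × ℝ) → ℕ :=
      fun e => (J.powerset.filter
        (fun P => (hdf e ∈ J → hdf e ∈ P) ∧ (tlf e ∈ J → tlf e ∉ P))).card with hcnt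
    set u : (Fin n → ℝ × ℝ) → ℕ :=
      fun e => (if hdf e ∈ J then 1 else 2) * (if tlf e ∈ J then 1 else 2) with hu
    have hFcard : ∀ P : Finset ℝ, (F P).card ≤ m := by
      intro P
      apply key
      · simp only [hFdef]
        exact Finset.filter_subset _ _
      · intro x hx y hy hxy hadj
        simp only [hFdef] at hx hy
        rw [Finset.mem_filter] at hx hy
        have hax := hS x hx.1 lastIdx
        have hay := hS y hy.1 lastIdx
        rcases (adjI_iff hax hay).1 hadj with h | h
        · have h' : hdf x = tlf y := by simp only [hhdf, htlf]; exact h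
          have hw : hdf x ∈ J := by
            rw [hJ]
            refine Finset.mem_inter.2 ⟨Finset.mem_image_of_mem _ hx.1, ?_⟩
            rw [h']
            exact Finset.mem_image_of_mem _ hy.1
          have hp1 : hdf x ∈ P := hx.2.1 hw
          have hw2 : tlf y ∈ J := by rw [← h']; exact hw
          have hp2 : tlf y ∉ P := hy.2.2 hw2
          rw [← h'] at hp2
          exact hp2 hp1
        · have h' : hdf y = tlf x := by simp only [hhdf, htlf]; exact h
          have hw : hdf y ∈ J := by
            rw [hJ]
            refine Finset.mem_inter.2 ⟨Finset.mem_image_of_mem _ hy.1, ?_⟩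
            rw [h']
            exact Finset.mem_image_of_mem _ hx.1
          have hp1 : hdf y ∈ P := hy.2.1 hw
          have hw2 : tlf x ∈ J := by rw [← h']; exact hw
          have hp2 : tlf x ∉ P := hx.2.2 hw2
          rw [← h'] at hp2
          exact hp2 hp1
    have hsum : ∑ P ∈ J.powerset, (F P).card = ∑ e ∈ S, cnt e := by
      simp only [hFdef, hcnt, Finset.card_filter]
      exact Finset.sum_comm
    have hLcnt : ∀ e ∈ S, 4 * cnt e = u e * 2 ^ J.card := by
      intro e he
      have hlt := htlhd e he
      simp only [hcnt, hu]
      by_cases h1 : hdf e ∈ J <;> by_cases h2 : tlf e ∈ J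
      · have hne2 : hdf e ≠ tlf e := ne_of_gt hlt
        have hJ2 : 2 ≤ J.card := Finset.one_lt_card.2 ⟨hdf e, h1, tlf e, h2, hne2⟩
        have hfe : J.powerset.filter
            (fun P => (hdf e ∈ J → hdf e ∈ P) ∧ (tlf e ∈ J → tlf e ∉ P))
            = J.powerset.filter (fun P => hdf e ∈ P ∧ tlf e ∉ P) := by
          apply Finset.filter_congr
          intro P _
          simp [h1, h2]
        rw [hfe, card_filter_mem_notMem' J _ _ h1 h2 hne2, if_pos h1, if_pos h2]
        obtain ⟨k, hk⟩ : ∃ k, J.card = k + 2 := ⟨J.card - 2, by omega⟩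
        rw [hk]
        simp only [Nat.add_sub_cancel]
        rw [pow_add]
        ring
      · have hfe : J.powerset.filter
            (fun P => (hdf e ∈ J → hdf e ∈ P) ∧ (tlf e ∈ J → tlf e ∉ P))
            = J.powerset.filter (fun P => hdf e ∈ P) := by
          apply Finset.filter_congr
          intro P _
          simp [h1, h2]
        have hc1 : 1 ≤ J.card := Finset.card_pos.2 ⟨hdf e, h1⟩
        rw [hfe, card_filter_mem' J _ h1, if_pos h1, if_neg h2]
        obtain ⟨k, hk⟩ : ∃ k, J.card = k + 1 := ⟨J.card - 1, by omega⟩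
        rw [hk]
        simp only [Nat.add_sub_cancel]
        rw [pow_succ]
        ring
      · have hfe : J.powerset.filter
            (fun P => (hdf e ∈ J → hdf e ∈ P) ∧ (tlf e ∈ J → tlf e ∉ P))
            = J.powerset.filter (fun P => tlf e ∉ P) := by
          apply Finset.filter_congr
          intro P _
          simp [h1, h2]
        have hc1 : 1 ≤ J.card := Finset.card_pos.2 ⟨tlf e, h2⟩
        rw [hfe, card_filter_notMem' J _ h2, if_neg h1, if_pos h2]
        obtain ⟨k, hk⟩ : ∃ k, J.card = k + 1 := ⟨J.card - 1, by omega⟩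
        rw [hk]
        simp only [Nat.add_sub_cancel]
        rw [pow_succ]
        ring
      · have hfe : J.powerset.filter
            (fun P => (hdf e ∈ J → hdf e ∈ P) ∧ (tlf e ∈ J → tlf e ∉ P))
            = J.powerset := by
          apply Finset.filter_true_of_mem
          intro P _
          exact ⟨fun hh => absurd hh h1, fun hh => absurd hh h2⟩
        rw [hfe, Finset.card_powerset, if_neg h1, if_neg h2]
    have h4 : 4 * ∑ e ∈ S, cnt e = (∑ e ∈ S, u e) * 2 ^ J.card := by
      rw [Finset.mul_sum, Finset.sum_mul]
      exact Finset.sum_congr rfl hLcnt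
    have hSP : ∑ P ∈ J.powerset, (F P).card ≤ 2 ^ J.card * m := by
      calc ∑ P ∈ J.powerset, (F P).card ≤ ∑ P ∈ J.powerset, m :=
            Finset.sum_le_sum (fun P _ => hFcard P)
        _ = 2 ^ J.card * m := by
            rw [Finset.sum_const, smul_eq_mul, Finset.card_powerset]
    -- the two special boxes
    set v : ℝ := J.min' hJne with hv
    set V : ℝ := J.max' hJne with hV
    have hvJ : v ∈ J := J.min'_mem hJne
    have hVJ : V ∈ J := J.max'_mem hJne
    have hvJ' : v ∈ (S.image hdf) ∩ (S.image tlf) := by rw [← hJ]; exact hvJ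
    have hVJ' : V ∈ (S.image hdf) ∩ (S.image tlf) := by rw [← hJ]; exact hVJ
    obtain ⟨estar, heS, hehd⟩ := Finset.mem_image.1 (Finset.mem_inter.1 hvJ').1
    obtain ⟨fstar, hfS, hftl⟩ := Finset.mem_image.1 (Finset.mem_inter.1 hVJ').2
    have h_tl_estar : tlf estar ∉ J := by
      intro hmem
      have h1 := Finset.min'_le J _ hmem
      rw [← hv] at h1
      have h2 := htlhd estar heS
      rw [hehd] at h2
      linarith
    have h_hd_fstar : hdf fstar ∉ J := by
      intro hmem
      have h1 := Finset.le_max' J _ hmem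
      rw [← hV] at h1
      have h2 := htlhd fstar hfS
      rw [hftl] at h2
      linarith
    have hef : estar ≠ fstar := by
      intro h
      apply h_hd_fstar
      rw [← h, hehd]
      exact hvJ
    have hu_estar : u estar = 2 := by
      have h1 : hdf estar ∈ J := by rw [hehd]; exact hvJ
      simp only [hu, if_pos h1, if_neg h_tl_estar]
    have hu_fstar : u fstar = 2 := by
      have h1 : tlf fstar ∈ J := by rw [hftl]; exact hVJ
      simp only [hu, if_neg h_hd_fstar, if_pos h1]
    have hpairsub : ({estar, fstar} : Finset (Fin n → ℝ × ℝ)) ⊆ S := by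
      intro x hx
      rcases Finset.mem_insert.1 hx with rfl | hx
      · exact heS
      · rw [Finset.mem_singleton.1 hx]; exact hfS
    have hsplit : ∑ e ∈ S, u e
        = ∑ e ∈ S \ {estar, fstar}, u e + ∑ e ∈ ({estar, fstar} : Finset _), u e :=
      (Finset.sum_sdiff hpairsub).symm
    have hupair : ∑ e ∈ ({estar, fstar} : Finset (Fin n → ℝ × ℝ)), u e = 4 := by
      rw [Finset.sum_pair hef, hu_estar, hu_fstar]
    have hu1 : ∀ e, 1 ≤ u e := by
      intro e
      simp only [hu]
      split_ifs <;> norm_num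
    have hcsd : (S \ {estar, fstar}).card = S.card - 2 := by
      rw [Finset.card_sdiff_of_subset hpairsub, Finset.card_pair hef]
    have hlowsd : (S \ {estar, fstar}).card ≤ ∑ e ∈ S \ {estar, fstar}, u e := by
      calc (S \ {estar, fstar}).card = ∑ _e ∈ S \ {estar, fstar}, 1 := by
            rw [Finset.sum_const, smul_eq_mul, mul_one]
        _ ≤ _ := Finset.sum_le_sum (fun e _ => hu1 e)
    have hSu_low : S.card + 2 ≤ ∑ e ∈ S, u e := by
      rw [hsplit, hupair]
      omega
    have hSu_up : ∑ e ∈ S, u e ≤ 4 * m := by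
      have hppos : 0 < 2 ^ J.card := pow_pos (by norm_num) _
      have hchain : (∑ e ∈ S, u e) * 2 ^ J.card ≤ (4 * m) * 2 ^ J.card := by
        calc (∑ e ∈ S, u e) * 2 ^ J.card = 4 * ∑ e ∈ S, cnt e := h4.symm
          _ = 4 * ∑ P ∈ J.powerset, (F P).card := by rw [hsum]
          _ ≤ 4 * (2 ^ J.card * m) := Nat.mul_le_mul (le_refl 4) hSP
          _ = (4 * m) * 2 ^ J.card := by ring
      exact Nat.le_of_mul_le_mul_right hchain hppos
    by_cases hbig : S.card + 3 ≤ ∑ e ∈ S, u e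
    · omega
    · have hSu_eq : ∑ e ∈ S, u e = S.card + 2 := by omega
      have hNeq : S.card + 2 = 4 * m := by omega
      have hPsum_eq : ∑ P ∈ J.powerset, (F P).card = 2 ^ J.card * m := by
        have h5 : 4 * ∑ P ∈ J.powerset, (F P).card = 4 * (2 ^ J.card * m) := by
          calc 4 * ∑ P ∈ J.powerset, (F P).card = 4 * ∑ e ∈ S, cnt e := by rw [hsum]
            _ = (∑ e ∈ S, u e) * 2 ^ J.card := h4
            _ = (4 * m) * 2 ^ J.card := by rw [hSu_eq, hNeq]
            _ = 4 * (2 ^ J.card * m) := by ring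
        omega
      have hFeq : ∀ P ∈ J.powerset, (F P).card = m := by
        by_contra hcon
        push_neg at hcon
        obtain ⟨P0, hP0, hP0ne⟩ := hcon
        have hP0lt : (F P0).card < m := lt_of_le_of_ne (hFcard P0) hP0ne
        have hlt : ∑ P ∈ J.powerset, (F P).card < ∑ P ∈ J.powerset, m :=
          Finset.sum_lt_sum (fun P _ => hFcard P) ⟨P0, hP0, hP0lt⟩
        rw [Finset.sum_const, smul_eq_mul, Finset.card_powerset] at hlt
        omega
      have hone : ∀ e ∈ S \ {estar, fstar}, u e = 1 := by
        by_contra hcon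
        push_neg at hcon
        obtain ⟨e0, he0, he0ne⟩ := hcon
        have hgt : 1 < u e0 := lt_of_le_of_ne (hu1 e0) (Ne.symm he0ne)
        have hlt2 : ∑ _e ∈ S \ {estar, fstar}, 1 < ∑ e ∈ S \ {estar, fstar}, u e :=
          Finset.sum_lt_sum (fun e _ => hu1 e) ⟨e0, he0, hgt⟩
        rw [Finset.sum_const, smul_eq_mul, mul_one] at hlt2
        omega
      -- structural contradiction
      have hpart1 := Finset.card_filter_add_card_filter_not
        (s := F ∅) (p := fun e => tlf e = v)
      have hpart2 := Finset.card_filter_add_card_filter_not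
        (s := F {v}) (p := fun e => hdf e = v)
      have hcF0 : (F ∅).card = m := hFeq ∅ (Finset.empty_mem_powerset J)
      have hcFv : (F {v}).card = m :=
        hFeq {v} (Finset.mem_powerset.2 (Finset.singleton_subset_iff.2 hvJ))
      have hBeq : (F ∅).filter (fun e => ¬ tlf e = v)
          = (F {v}).filter (fun e => ¬ hdf e = v) := by
        ext e
        simp only [hFdef, Finset.mem_filter]
        constructor
        · rintro ⟨⟨heS', hcond1, hcond2⟩, htlv⟩
          refine ⟨⟨heS', ?_, ?_⟩, ?_⟩
          · intro hh
            exact absurd (hcond1 hh) (Finset.notMem_empty _)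
          · intro htJ
            rw [Finset.mem_singleton]
            exact htlv
          · intro hhv
            exact (Finset.notMem_empty _) (hcond1 (by rw [hhv]; exact hvJ))
        · rintro ⟨⟨heS', hcond1, hcond2⟩, hhdv⟩
          refine ⟨⟨heS', ?_, ?_⟩, ?_⟩
          · intro hh
            exact absurd (Finset.mem_singleton.1 (hcond1 hh)) hhdv
          · intro htJ
            exact Finset.notMem_empty _
          · intro htlv
            have htJ : tlf e ∈ J := by rw [htlv]; exact hvJ
            exact (hcond2 htJ) (by rw [htlv]; exact Finset.mem_singleton_self v)
      have hHveq : (F {v}).filter (fun e => hdf e = v) = S.filter (fun e => hdf e = v) := by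
        ext e
        simp only [hFdef, Finset.mem_filter]
        constructor
        · rintro ⟨⟨heS', _, _⟩, hh⟩
          exact ⟨heS', hh⟩
        · rintro ⟨heS', hh⟩
          refine ⟨⟨heS', ?_, ?_⟩, hh⟩
          · intro _
            rw [Finset.mem_singleton]
            exact hh
          · intro htJ
            exfalso
            have hlt' := htlhd e heS'
            have hgev := Finset.min'_le J _ htJ
            rw [← hv] at hgev
            rw [hh] at hlt'
            linarith
      have hAeq : ((F ∅).filter (fun e => tlf e = v)).card
          = (S.filter (fun e => hdf e = v)).card := by
        rw [hcF0] at hpart1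
        rw [hcFv] at hpart2
        rw [hBeq] at hpart1
        rw [hHveq] at hpart2
        omega
      have hCpos : 0 < (S.filter (fun e => hdf e = v)).card :=
        Finset.card_pos.2 ⟨estar, Finset.mem_filter.2 ⟨heS, hehd⟩⟩
      have hApos : 0 < ((F ∅).filter (fun e => tlf e = v)).card := by omega
      obtain ⟨g0, hg0⟩ := Finset.card_pos.1 hApos
      have hg0' := Finset.mem_filter.1 hg0
      have hg0F := hg0'.1
      have hg0tl : tlf g0 = v := hg0'.2
      simp only [hFdef] at hg0F
      rw [Finset.mem_filter] at hg0F
      have hg0S : g0 ∈ S := hg0F.1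
      have hg0hdJ : hdf g0 ∉ J := by
        intro hmem
        exact Finset.notMem_empty _ (hg0F.2.1 hmem)
      have hg0tlJ : tlf g0 ∈ J := by rw [hg0tl]; exact hvJ
      have hg0pair : g0 ∈ ({estar, fstar} : Finset (Fin n → ℝ × ℝ)) := by
        by_contra hgp
        have hmem : g0 ∈ S \ {estar, fstar} := Finset.mem_sdiff.2 ⟨hg0S, hgp⟩
        have h1 := hone g0 hmem
        simp only [hu, if_neg hg0hdJ, if_pos hg0tlJ] at h1
        omega
      have hg0fstar : g0 = fstar := by
        rcases Finset.mem_insert.1 hg0pair with h | h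
        · exfalso
          rw [h] at hg0hdJ
          apply hg0hdJ
          rw [hehd]
          exact hvJ
        · exact Finset.mem_singleton.1 h
      have hVv : V = v := by
        rw [← hftl, ← hg0fstar]
        exact hg0tl
      have hJsingleton : ∀ w ∈ J, w = v := by
        intro w hw
        have h1 := Finset.min'_le J w hw
        have h2 := Finset.le_max' J w hw
        rw [← hv] at h1
        rw [← hV] at h2
        rw [hVv] at h2
        linarith
      have hsdne : (S \ {estar, fstar}).Nonempty := by
        rw [← Finset.card_pos, hcsd]
        omega
      obtain ⟨e0, he0⟩ := hsdne
      have hue0 := hone e0 he0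
      simp only [hu] at hue0
      by_cases a1 : hdf e0 ∈ J
      · by_cases a2 : tlf e0 ∈ J
        · have hh := hJsingleton _ a1
          have ht := hJsingleton _ a2
          have hlt' := htlhd e0 (Finset.mem_sdiff.1 he0).1
          rw [hh, ht] at hlt'
          exact lt_irrefl _ hlt'
        · rw [if_pos a1, if_neg a2] at hue0
          omega
      · by_cases a2 : tlf e0 ∈ J
        · rw [if_neg a1, if_pos a2] at hue0
          omega
        · rw [if_neg a1, if_neg a2] at hue0
          omega
end

section
/- The maximum cardinality of a nearly neighbourly family of 2-boxes (standard rectangles in ℝ²) is exactly 5. -/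
/-- From adjacency of positive-length intervals, they touch at an endpoint. -/
lemma icc_touch {I J : ℝ × ℝ} (hI : I.1 < I.2) (hJ : J.1 < J.2) (h : AdjI I J) :
    I.2 = J.1 ∨ J.2 = I.1 := by
  obtain ⟨x, hx⟩ := h
  rw [Set.Icc_inter_Icc, Set.Icc_eq_singleton_iff] at hx
  obtain ⟨h1, h2⟩ := hx
  have key : I.1 ⊔ J.1 = I.2 ⊓ J.2 := h1.trans h2.symm
  rcases le_total I.1 J.1 with h'|h' <;> rcases le_total I.2 J.2 with h''|h''
  · rw [sup_eq_right.mpr h', inf_eq_left.mpr h''] at key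
    exact Or.inl key.symm
  · rw [sup_eq_right.mpr h', inf_eq_right.mpr h''] at key
    exact absurd key (ne_of_lt hJ)
  · rw [sup_eq_left.mpr h', inf_eq_left.mpr h''] at key
    exact absurd key (ne_of_lt hI)
  · rw [sup_eq_left.mpr h', inf_eq_right.mpr h''] at key
    exact Or.inr key.symm

/-- No three positive-length intervals pairwise touch. -/
lemma no_three {a1 b1 a2 b2 a3 b3 : ℝ} (h1 : a1 < b1) (h2 : a2 < b2) (h3 : a3 < b3)
    (t12 : b1 = a2 ∨ b2 = a1) (t13 : b1 = a3 ∨ b3 = a1) (t23 : b2 = a3 ∨ b3 = a2) :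
    False := by
  rcases t12 with h|h <;> rcases t13 with h'|h' <;> rcases t23 with h''|h'' <;> linarith

/-- No three boxes pairwise adjacent in the same coordinate. -/
lemma box_no_tri (i : Fin 2) (X Y Z : Fin 2 → ℝ × ℝ)
    (hX : ∀ j, (X j).1 < (X j).2) (hY : ∀ j, (Y j).1 < (Y j).2)
    (hZ : ∀ j, (Z j).1 < (Z j).2)
    (hXY : AdjI (X i) (Y i)) (hXZ : AdjI (X i) (Z i)) (hYZ : AdjI (Y i) (Z i)) : False :=
  no_three (hX i) (hY i) (hZ i)
    (icc_touch (hX i) (hY i) hXY) (icc_touch (hX i) (hZ i) hXZ)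
    (icc_touch (hY i) (hZ i) hYZ)

lemma adjbox_or {u v : Fin 2 → ℝ × ℝ} (h : AdjBox u v) :
    AdjI (u 0) (v 0) ∨ AdjI (u 1) (v 1) := by
  obtain ⟨i, hi⟩ := h
  fin_cases i
  · exact Or.inl hi
  · exact Or.inr hi

lemma three_mem {p : Fin 5 → Prop} [DecidablePred p]
    (h : 3 ≤ (Finset.univ.filter p).card) :
    ∃ x y z : Fin 5, x ≠ y ∧ x ≠ z ∧ y ≠ z ∧ p x ∧ p y ∧ p z := by
  obtain ⟨t, hts, ht3⟩ := Finset.exists_subset_card_eq h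
  obtain ⟨x, y, z, hxy, hxz, hyz, rfl⟩ := Finset.card_eq_three.mp ht3
  exact ⟨x, y, z, hxy, hxz, hyz,
    (Finset.mem_filter.mp (hts (by simp))).2,
    (Finset.mem_filter.mp (hts (by simp))).2,
    (Finset.mem_filter.mp (hts (by simp))).2⟩

lemma adjL {a b d : ℝ} (h1 : a ≤ b) (h2 : b ≤ d) : AdjI (a, b) (b, d) := by
  refine ⟨b, ?_⟩
  ext y
  simp only [Set.mem_inter_iff, Set.mem_Icc, Set.mem_singleton_iff]
  constructor
  · rintro ⟨⟨_, hy1⟩, hy2, _⟩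
    exact le_antisymm hy1 hy2
  · rintro rfl
    exact ⟨⟨h1, le_refl _⟩, le_refl _, h2⟩

lemma adjR {a b d : ℝ} (h1 : a ≤ b) (h2 : b ≤ d) : AdjI (b, d) (a, b) := by
  refine ⟨b, ?_⟩
  ext y
  simp only [Set.mem_inter_iff, Set.mem_Icc, Set.mem_singleton_iff]
  constructor
  · rintro ⟨⟨hy1, _⟩, _, hy2⟩
    exact le_antisymm hy2 hy1
  · rintro rfl
    exact ⟨⟨le_refl _, h2⟩, h1, le_refl _⟩

def B1 : Fin 2 → ℝ × ℝ := ![(0, 1), (0, 1)]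
def B2 : Fin 2 → ℝ × ℝ := ![(1, 2), (2, 3)]
def B3 : Fin 2 → ℝ × ℝ := ![(1, 3), (3, 4)]
def B4 : Fin 2 → ℝ × ℝ := ![(2, 3), (1, 3)]
def B5 : Fin 2 → ℝ × ℝ := ![(3, 4), (1, 2)]

/-- The maximum cardinality of a nearly neighbourly family of 2-boxes is exactly 5. -/
theorem stmt_16 :
    (∀ S : Finset (Fin 2 → ℝ × ℝ),
      (∀ I ∈ S, ∀ i, (I i).1 < (I i).2) →
      (∀ I ∈ S, ∀ J ∈ S, I ≠ J → AdjBox I J) → S.card ≤ 5) ∧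
    (∃ S : Finset (Fin 2 → ℝ × ℝ),
      (∀ I ∈ S, ∀ i, (I i).1 < (I i).2) ∧
      (∀ I ∈ S, ∀ J ∈ S, I ≠ J → AdjBox I J) ∧ S.card = 5) := by
  classical
  constructor
  · -- upper bound
    intro S hpos hadj
    by_contra hcard
    push_neg at hcard
    obtain ⟨T, hTS, hT6⟩ := Finset.exists_subset_card_eq (s := S) (n := 6) (by omega)
    have e := Finset.equivFinOfCardEq hT6
    set g : Fin 6 → (Fin 2 → ℝ × ℝ) := fun i => ((e.symm i : T) : Fin 2 → ℝ × ℝ) with hg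
    have hgS : ∀ i, g i ∈ S := fun i => hTS (e.symm i).2
    have hginj : Function.Injective g := by
      intro i j h
      have : e.symm i = e.symm j := Subtype.ext h
      exact e.symm.injective this
    set a := g 0 with ha
    set p : Fin 5 → Prop := fun k => AdjI (a 0) (g k.succ 0) with hp
    have h5 : (Finset.univ.filter p).card + (Finset.univ.filter (fun k => ¬ p k)).card = 5 := by
      rw [Finset.card_filter_add_card_filter_not]
      simp
    -- distinctness helpers
    have hne0 : ∀ k : Fin 5, a ≠ g k.succ := by
      intro k h
      exact Fin.succ_ne_zero k (hginj h).symm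
    have hnesucc : ∀ k l : Fin 5, k ≠ l → g k.succ ≠ g l.succ := by
      intro k l hkl h
      exact hkl (Fin.succ_injective _ (hginj h))
    rcases le_or_gt 3 (Finset.univ.filter p).card with hbig | hsmall
    · obtain ⟨x, y, z, hxy, hxz, hyz, px, py, pz⟩ := three_mem hbig
      have Auv := adjbox_or (hadj _ (hgS x.succ) _ (hgS y.succ) (hnesucc _ _ hxy))
      have Auw := adjbox_or (hadj _ (hgS x.succ) _ (hgS z.succ) (hnesucc _ _ hxz))
      have Avw := adjbox_or (hadj _ (hgS y.succ) _ (hgS z.succ) (hnesucc _ _ hyz))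
      have Pa := hpos a (hgS 0)
      have Pu := hpos _ (hgS x.succ)
      have Pv := hpos _ (hgS y.succ)
      have Pw := hpos _ (hgS z.succ)
      rcases Auv with h|h
      · exact box_no_tri 0 a _ _ Pa Pu Pv px py h
      rcases Avw with h'|h'
      · exact box_no_tri 0 a _ _ Pa Pv Pw py pz h'
      rcases Auw with h''|h''
      · exact box_no_tri 0 a _ _ Pa Pu Pw px pz h''
      exact box_no_tri 1 _ _ _ Pu Pv Pw h h'' h'
    · have hbig : 3 ≤ (Finset.univ.filter (fun k => ¬ p k)).card := by omega
      obtain ⟨x, y, z, hxy, hxz, hyz, px, py, pz⟩ := three_mem hbig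
      have qq : ∀ k : Fin 5, ¬ p k → AdjI (a 1) (g k.succ 1) := by
        intro k hk
        rcases adjbox_or (hadj a (hgS 0) _ (hgS k.succ) (hne0 k)) with h|h
        · exact absurd h hk
        · exact h
      have qx := qq x px
      have qy := qq y py
      have qz := qq z pz
      have Auv := (adjbox_or (hadj _ (hgS x.succ) _ (hgS y.succ) (hnesucc _ _ hxy))).symm
      have Auw := (adjbox_or (hadj _ (hgS x.succ) _ (hgS z.succ) (hnesucc _ _ hxz))).symm
      have Avw := (adjbox_or (hadj _ (hgS y.succ) _ (hgS z.succ) (hnesucc _ _ hyz))).symm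
      have Pa := hpos a (hgS 0)
      have Pu := hpos _ (hgS x.succ)
      have Pv := hpos _ (hgS y.succ)
      have Pw := hpos _ (hgS z.succ)
      rcases Auv with h|h
      · exact box_no_tri 1 a _ _ Pa Pu Pv qx qy h
      rcases Avw with h'|h'
      · exact box_no_tri 1 a _ _ Pa Pv Pw qy qz h'
      rcases Auw with h''|h''
      · exact box_no_tri 1 a _ _ Pa Pu Pw qx qz h''
      exact box_no_tri 0 _ _ _ Pu Pv Pw h h'' h'
  · -- construction
    refine ⟨{B1, B2, B3, B4, B5}, ?_, ?_, ?_⟩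
    · intro I hI i
      simp only [Finset.mem_insert, Finset.mem_singleton] at hI
      rcases hI with rfl|rfl|rfl|rfl|rfl <;> fin_cases i <;>
        norm_num [B1, B2, B3, B4, B5]
    · intro I hI J hJ hne
      simp only [Finset.mem_insert, Finset.mem_singleton] at hI hJ
      rcases hI with rfl|rfl|rfl|rfl|rfl <;> rcases hJ with rfl|rfl|rfl|rfl|rfl <;>
        first
          | exact absurd rfl hne
          | exact ⟨0, adjL (by norm_num) (by norm_num)⟩
          | exact ⟨0, adjR (by norm_num) (by norm_num)⟩
          | exact ⟨1, adjL (by norm_num) (by norm_num)⟩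
          | exact ⟨1, adjR (by norm_num) (by norm_num)⟩
    · have d12 : B1 ≠ B2 := fun h => by have := congrFun h 0; norm_num [B1, B2, Prod.ext_iff] at this
      have d13 : B1 ≠ B3 := fun h => by have := congrFun h 0; norm_num [B1, B3, Prod.ext_iff] at this
      have d14 : B1 ≠ B4 := fun h => by have := congrFun h 0; norm_num [B1, B4, Prod.ext_iff] at this
      have d15 : B1 ≠ B5 := fun h => by have := congrFun h 0; norm_num [B1, B5, Prod.ext_iff] at this
      have d23 : B2 ≠ B3 := fun h => by have := congrFun h 0; norm_num [B2, B3, Prod.ext_iff] at this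
      have d24 : B2 ≠ B4 := fun h => by have := congrFun h 0; norm_num [B2, B4, Prod.ext_iff] at this
      have d25 : B2 ≠ B5 := fun h => by have := congrFun h 0; norm_num [B2, B5, Prod.ext_iff] at this
      have d34 : B3 ≠ B4 := fun h => by have := congrFun h 0; norm_num [B3, B4, Prod.ext_iff] at this
      have d35 : B3 ≠ B5 := fun h => by have := congrFun h 0; norm_num [B3, B5, Prod.ext_iff] at this
      have d45 : B4 ≠ B5 := fun h => by have := congrFun h 0; norm_num [B4, B5, Prod.ext_iff] at this
      simp [Finset.card_insert_of_notMem, Finset.mem_insert, Finset.mem_singleton,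
        d12, d13, d14, d15, d23, d24, d25, d34, d35, d45]
end
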